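/- arXiv:2602.16104 — 5 statements merged into one kernel-verified Lean document; each statement's English description precedes it below -/
import Mathlib

section
/- Let P be a lattice polytope in ℝ² and let Δ₂ = conv{(0,0),(1,0),(0,1)} be the standard 2-simplex. Then V(P,Δ₂) equals the smallest non-negative integer δ such that P + t ⊆ δ·Δ₂ for some lattice translation vector t ∈ ℤ². -/
open MeasureTheory Pointwise

/-- Normalized mixed area of two compact convex sets in ℝ². -/
noncomputable def mixedArea (P Q : Set (ℝ × ℝ)) : ℝ :=
  (volume (P + Q)).toReal - (volume P).toReal - (volume Q).toReal

/-- Embedding of ℤ² into ℝ². -/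
def latticeEmbed (p : ℤ × ℤ) : ℝ × ℝ := ((p.1 : ℝ), (p.2 : ℝ))

/-- A lattice polytope in ℝ² is the convex hull of a finite nonempty set of lattice points. -/
def IsLatticePolytope (P : Set (ℝ × ℝ)) : Prop :=
  ∃ S : Finset (ℤ × ℤ), S.Nonempty ∧ P = convexHull ℝ (latticeEmbed '' (S : Set (ℤ × ℤ)))

/-- The standard 2-simplex `Δ₂ = conv{(0,0),(1,0),(0,1)}` in ℝ². -/
def stdTriangle : Set (ℝ × ℝ) :=
  convexHull ℝ {((0 : ℝ), (0 : ℝ)), ((1 : ℝ), (0 : ℝ)), ((0 : ℝ), (1 : ℝ))}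

open Set

namespace MixedAreaAux

/-- The slice of a planar set at abscissa `x`. -/
def sl (A : Set (ℝ × ℝ)) (x : ℝ) : Set ℝ := {y | (x, y) ∈ A}

lemma mem_sl {A : Set (ℝ × ℝ)} {x y : ℝ} : y ∈ sl A x ↔ (x, y) ∈ A := Iff.rfl

lemma volume_eq_lintegral_sl {A : Set (ℝ × ℝ)} (hA : MeasurableSet A) :
    volume A = ∫⁻ x, volume (sl A x) := by
  rw [Measure.volume_eq_prod ℝ ℝ, Measure.prod_apply hA]
  rfl

lemma stdTriangle_subset :
    stdTriangle ⊆ {q : ℝ × ℝ | 0 ≤ q.1 ∧ 0 ≤ q.2 ∧ q.1 + q.2 ≤ 1} := by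
  apply convexHull_min
  · rintro q hq
    simp only [Set.mem_insert_iff, Set.mem_singleton_iff] at hq
    rcases hq with h | h | h <;> subst h <;> norm_num
  · rintro x hx y hy s t hs ht hst
    simp only [Set.mem_setOf_eq] at hx hy ⊢
    simp only [Prod.fst_add, Prod.snd_add, Prod.smul_fst, Prod.smul_snd, smul_eq_mul]
    refine ⟨by nlinarith [hx.1, hy.1], by nlinarith [hx.2.1, hy.2.1], by nlinarith [hx.2.2, hy.2.2]⟩

lemma mem_stdTriangle {q : ℝ × ℝ} (h1 : 0 ≤ q.1) (h2 : 0 ≤ q.2) (h3 : q.1 + q.2 ≤ 1) :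
    q ∈ stdTriangle := by
  have hC := convex_convexHull ℝ ({((0 : ℝ), (0 : ℝ)), ((1 : ℝ), (0 : ℝ)), ((0 : ℝ), (1 : ℝ))} :
    Set (ℝ × ℝ))
  have v0 : ((0 : ℝ), (0 : ℝ)) ∈ stdTriangle := subset_convexHull _ _ (by simp)
  have v1 : ((1 : ℝ), (0 : ℝ)) ∈ stdTriangle := subset_convexHull _ _ (by simp)
  have v2 : ((0 : ℝ), (1 : ℝ)) ∈ stdTriangle := subset_convexHull _ _ (by simp)
  rcases eq_or_lt_of_le (add_nonneg h1 h2) with hs | hs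
  · have hq1 : q.1 = 0 := by linarith
    have hq2 : q.2 = 0 := by linarith
    have : q = ((0 : ℝ), (0 : ℝ)) := Prod.ext hq1 hq2
    rw [this]; exact v0
  · set s := q.1 + q.2 with hsdef
    have hw : (q.1 / s) • ((1 : ℝ), (0 : ℝ)) + (q.2 / s) • ((0 : ℝ), (1 : ℝ)) ∈ stdTriangle := by
      refine hC v1 v2 (div_nonneg h1 hs.le) (div_nonneg h2 hs.le) ?_
      field_simp
      exact hsdef.symm
    have hq : q = s • ((q.1 / s) • ((1 : ℝ), (0 : ℝ)) + (q.2 / s) • ((0 : ℝ), (1 : ℝ)))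
        + (1 - s) • ((0 : ℝ), (0 : ℝ)) := by
      have hsne : s ≠ 0 := hs.ne'
      apply Prod.ext <;>
        simp only [Prod.fst_add, Prod.snd_add, Prod.smul_fst, Prod.smul_snd, smul_eq_mul] <;>
        field_simp
      all_goals ring
    rw [hq]
    exact hC hw v0 hs.le (by linarith) (by ring)

lemma stdTriangle_convex : Convex ℝ stdTriangle := convex_convexHull ℝ _

lemma stdTriangle_compact : IsCompact stdTriangle := by
  exact (Set.toFinite _).isCompact_convexHull ℝ

/-- Convex sets have order-convex slices (vertical segments). -/
lemma mem_of_between {A : Set (ℝ × ℝ)} (hA : Convex ℝ A) {x y1 y2 y : ℝ}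
    (hm1 : (x, y1) ∈ A) (hm2 : (x, y2) ∈ A) (hy : y ∈ Icc y1 y2) : (x, y) ∈ A := by
  rcases eq_or_lt_of_le (hy.1.trans hy.2) with h | h
  · have : y = y1 := le_antisymm (h ▸ hy.2) hy.1
    rwa [this]
  · set t := (y - y1) / (y2 - y1) with ht
    have h21 : 0 < y2 - y1 := by linarith
    have ht0 : 0 ≤ t := div_nonneg (by linarith [hy.1]) h21.le
    have ht1 : t ≤ 1 := by rw [ht, div_le_one h21]; linarith [hy.2]
    have := hA hm1 hm2 (by linarith : (0:ℝ) ≤ 1 - t) ht0 (by ring)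
    have htv : t * (y2 - y1) = y - y1 := div_mul_cancel₀ _ h21.ne'
    have hco : (1 - t) • ((x, y1) : ℝ × ℝ) + t • (x, y2) = (x, y) := by
      apply Prod.ext
      · simp only [Prod.fst_add, Prod.smul_fst, smul_eq_mul]; ring
      · simp only [Prod.snd_add, Prod.smul_snd, smul_eq_mul]; nlinarith [htv]
    rwa [hco] at this

/-- Convex-hull bound for a linear functional on the plane. -/
lemma hull_le {S : Set (ℝ × ℝ)} {α β r : ℝ} (h : ∀ p ∈ S, α * p.1 + β * p.2 ≤ r) :
    ∀ p ∈ convexHull ℝ S, α * p.1 + β * p.2 ≤ r := by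
  intro p hp
  have hc : Convex ℝ {p : ℝ × ℝ | α * p.1 + β * p.2 ≤ r} := by
    intro x hx y hy s t hs ht hst
    simp only [Set.mem_setOf_eq, Prod.fst_add, Prod.snd_add, Prod.smul_fst, Prod.smul_snd,
      smul_eq_mul] at hx hy ⊢
    have hr : s * r + t * r = r := by rw [← add_mul, hst, one_mul]
    nlinarith [mul_le_mul_of_nonneg_left hx hs, mul_le_mul_of_nonneg_left hy ht]
  exact convexHull_min h hc hp

lemma volume_eq_of_slices {A : Set (ℝ × ℝ)} (hA : MeasurableSet A) {l r : ℝ} (hlr : l ≤ r)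
    {G H : ℝ → ℝ}
    (hsl : ∀ x ∈ Icc l r, sl A x = Icc (G x) (H x))
    (hout : ∀ x ∉ Icc l r, sl A x = ∅)
    (hGH : ∀ x ∈ Icc l r, G x ≤ H x)
    (hint : IntervalIntegrable (fun x => H x - G x) volume l r) :
    volume A = ENNReal.ofReal (∫ x in l..r, (H x - G x)) := by
  rw [volume_eq_lintegral_sl hA]
  have hpt : ∀ x, volume (sl A x)
      = Set.indicator (Icc l r) (fun x => ENNReal.ofReal (H x - G x)) x := by
    intro x
    by_cases hx : x ∈ Icc l r
    · rw [hsl x hx, Set.indicator_of_mem hx, Real.volume_Icc]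
    · rw [hout x hx, Set.indicator_of_notMem hx, measure_empty]
  simp_rw [hpt]
  rw [lintegral_indicator measurableSet_Icc]
  have hInt : IntegrableOn (fun x => H x - G x) (Icc l r) volume :=
    (intervalIntegrable_iff_integrableOn_Icc_of_le hlr).mp hint
  rw [← ofReal_integral_eq_lintegral_ofReal hInt
      ((ae_restrict_iff' measurableSet_Icc).2 (Filter.Eventually.of_forall
        (fun x hx => sub_nonneg.2 (hGH x hx))))]
  congr 1
  rw [intervalIntegral.integral_of_le hlr, ← integral_Icc_eq_integral_Ioc]

end MixedAreaAux
section Core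



set_option maxHeartbeats 1000000 in
theorem core {K : Set (ℝ × ℝ)} (hconv : Convex ℝ K) (hcomp : IsCompact K) (hne : K.Nonempty) :
    (volume (K + stdTriangle)).toReal
      = (volume K).toReal + 1 / 2
        + (sSup ((fun p : ℝ × ℝ => p.1 + p.2) '' K) - sInf (Prod.fst '' K)
            - sInf (Prod.snd '' K)) := by
  classical
  have hKfst : IsCompact (Prod.fst '' K) := hcomp.image continuous_fst
  have hKsnd : IsCompact (Prod.snd '' K) := hcomp.image continuous_snd
  have hKsum : IsCompact ((fun p : ℝ × ℝ => p.1 + p.2) '' K) :=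
    hcomp.image (continuous_fst.add continuous_snd)
  set a := sInf (Prod.fst '' K) with hadef
  set a' := sSup (Prod.fst '' K) with ha'def
  set b := sInf (Prod.snd '' K) with hbdef
  set c := sSup ((fun p : ℝ × ℝ => p.1 + p.2) '' K) with hcdef
  have hfst_lb : ∀ p ∈ K, a ≤ p.1 := fun p hp => csInf_le hKfst.bddBelow ⟨p, hp, rfl⟩
  have hfst_ub : ∀ p ∈ K, p.1 ≤ a' := fun p hp => le_csSup hKfst.bddAbove ⟨p, hp, rfl⟩
  have hsnd_lb : ∀ p ∈ K, b ≤ p.2 := fun p hp => csInf_le hKsnd.bddBelow ⟨p, hp, rfl⟩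
  have hsum_ub : ∀ p ∈ K, p.1 + p.2 ≤ c := fun p hp => le_csSup hKsum.bddAbove ⟨p, hp, rfl⟩
  obtain ⟨pa, hpaK, hpa⟩ : ∃ p ∈ K, p.1 = a := by
    obtain ⟨p, hp, hpe⟩ := hKfst.sInf_mem (hne.image _)
    exact ⟨p, hp, hpe⟩
  obtain ⟨pa', hpa'K, hpa'⟩ : ∃ p ∈ K, p.1 = a' := by
    obtain ⟨p, hp, hpe⟩ := hKfst.sSup_mem (hne.image _)
    exact ⟨p, hp, hpe⟩
  obtain ⟨pb, hpbK, hpb⟩ : ∃ p ∈ K, p.2 = b := by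
    obtain ⟨p, hp, hpe⟩ := hKsnd.sInf_mem (hne.image _)
    exact ⟨p, hp, hpe⟩
  obtain ⟨pc, hpcK, hpc⟩ : ∃ p ∈ K, p.1 + p.2 = c := by
    obtain ⟨p, hp, hpe⟩ := hKsum.sSup_mem (hne.image _)
    exact ⟨p, hp, hpe⟩
  have haa' : a ≤ a' := hpa ▸ hfst_ub pa hpaK
  -- slice endpoint functions
  set g : ℝ → ℝ := fun x => sInf (MixedAreaAux.sl K x) with hgdef
  set h : ℝ → ℝ := fun x => sSup (MixedAreaAux.sl K x) with hhdef
  have hslne : ∀ x ∈ Set.Icc a a', (MixedAreaAux.sl K x).Nonempty := by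
    intro x hx
    rcases eq_or_lt_of_le haa' with heq | hlt
    · have hxa : x = a := le_antisymm (heq ▸ hx.2) hx.1
      refine ⟨pa.2, ?_⟩
      rw [MixedAreaAux.mem_sl, hxa, ← hpa]
      simpa using hpaK
    · set t := (x - a) / (a' - a) with htdef
      have hden : 0 < a' - a := by linarith
      have ht0 : 0 ≤ t := div_nonneg (by linarith [hx.1]) hden.le
      have ht1 : t ≤ 1 := by rw [htdef, div_le_one hden]; linarith [hx.2]
      have hw := hconv hpaK hpa'K (by linarith : (0:ℝ) ≤ 1 - t) ht0 (by ring)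
      have htv : t * (a' - a) = x - a := div_mul_cancel₀ _ hden.ne'
      have hw1 : ((1 - t) • pa + t • pa').1 = x := by
        simp only [Prod.fst_add, Prod.smul_fst, smul_eq_mul, hpa, hpa']
        nlinarith [htv]
      refine ⟨((1 - t) • pa + t • pa').2, ?_⟩
      rw [MixedAreaAux.mem_sl]
      have : (x, ((1 - t) • pa + t • pa').2) = (1 - t) • pa + t • pa' :=
        Prod.ext hw1.symm rfl
      rw [this]; exact hw
  have hslcomp : ∀ x : ℝ, IsCompact (MixedAreaAux.sl K x) := by
    intro x
    have hclosed : IsClosed (MixedAreaAux.sl K x) :=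
      hcomp.isClosed.preimage (Continuous.prodMk_right x)
    exact hKsnd.of_isClosed_subset hclosed (fun y hy => ⟨(x, y), hy, rfl⟩)
  have hslK : ∀ x ∈ Set.Icc a a', MixedAreaAux.sl K x = Set.Icc (g x) (h x) := by
    intro x hx
    have hord : (MixedAreaAux.sl K x).OrdConnected := by
      constructor
      intro y1 h1 y2 h2 z hz
      exact MixedAreaAux.mem_of_between hconv h1 h2 hz
    exact eq_Icc_of_connected_compact ⟨hslne x hx, hord.isPreconnected⟩ (hslcomp x)
  have hgh : ∀ x ∈ Set.Icc a a', g x ≤ h x := by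
    intro x hx
    have := hslne x hx
    rw [hslK x hx] at this
    exact Set.nonempty_Icc.mp this
  have hhK : ∀ x ∈ Set.Icc a a', (x, h x) ∈ K := by
    intro x hx
    have : h x ∈ MixedAreaAux.sl K x := by
      rw [hslK x hx]; exact Set.right_mem_Icc.2 (hgh x hx)
    exact this
  have hgK : ∀ x ∈ Set.Icc a a', (x, g x) ∈ K := by
    intro x hx
    have : g x ∈ MixedAreaAux.sl K x := by
      rw [hslK x hx]; exact Set.left_mem_Icc.2 (hgh x hx)
    exact this
  have hmemle : ∀ x ∈ Set.Icc a a', ∀ p ∈ K, p.1 = x → g x ≤ p.2 ∧ p.2 ≤ h x := by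
    intro x hx p hp hpx
    have : p.2 ∈ MixedAreaAux.sl K x := by
      rw [MixedAreaAux.mem_sl, ← hpx]; simpa using hp
    rw [hslK x hx] at this
    exact ⟨this.1, this.2⟩
  have hψc : ∀ x ∈ Set.Icc a a', h x + x ≤ c := by
    intro x hx
    have := hsum_ub (x, h x) (hhK x hx)
    simpa [add_comm] using this
  have hgb : ∀ x ∈ Set.Icc a a', b ≤ g x := fun x hx => hsnd_lb (x, g x) (hgK x hx)
  -- maximizer of h x + x and minimizer of g
  set tstar := pc.1 with htsdef
  have htmem : tstar ∈ Set.Icc a a' := ⟨hfst_lb pc hpcK, hfst_ub pc hpcK⟩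
  have hψt : h tstar + tstar = c := by
    have h1 := hψc tstar htmem
    have h2 := (hmemle tstar htmem pc hpcK rfl).2
    linarith [hpc]
  set ustar := pb.1 with husdef
  have humem : ustar ∈ Set.Icc a a' := ⟨hfst_lb pb hpbK, hfst_ub pb hpbK⟩
  have hgu : g ustar = b := by
    have h1 := hgb ustar humem
    have h2 := (hmemle ustar humem pb hpbK rfl).1
    linarith [hpb ▸ h2]
  -- monotonicity of ψ = h + id and of g
  have hcombo : ∀ x1 x2 w : ℝ, x1 ∈ Set.Icc a a' → w ∈ Set.Icc a a' → x2 ∈ Set.Icc a a' →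
      ∀ s : ℝ, 0 ≤ s → s ≤ 1 → (1 - s) * x1 + s * w = x2 →
      g x2 ≤ (1 - s) * g x1 + s * g w ∧ (1 - s) * h x1 + s * h w ≤ h x2 := by
    intro x1 x2 w hx1 hw hx2 s hs0 hs1 hsum
    constructor
    · have hmem := hconv (hgK x1 hx1) (hgK w hw) (by linarith : (0:ℝ) ≤ 1 - s) hs0 (by ring)
      have heq : ((1 - s) • ((x1, g x1) : ℝ × ℝ) + s • (w, g w)) =
          (x2, (1 - s) * g x1 + s * g w) := by
        apply Prod.ext
        · simpa using hsum
        · simp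
      rw [heq] at hmem
      exact (hmemle x2 hx2 _ hmem rfl).1
    · have hmem := hconv (hhK x1 hx1) (hhK w hw) (by linarith : (0:ℝ) ≤ 1 - s) hs0 (by ring)
      have heq : ((1 - s) • ((x1, h x1) : ℝ × ℝ) + s • (w, h w)) =
          (x2, (1 - s) * h x1 + s * h w) := by
        apply Prod.ext
        · simpa using hsum
        · simp
      rw [heq] at hmem
      exact (hmemle x2 hx2 _ hmem rfl).2
  have hparam : ∀ x1 x2 w : ℝ, x1 < w → x1 ≤ x2 → x2 ≤ w →
      ∃ s : ℝ, 0 ≤ s ∧ s ≤ 1 ∧ (1 - s) * x1 + s * w = x2 := by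
    intro x1 x2 w h1w h12 h2w
    refine ⟨(x2 - x1) / (w - x1), div_nonneg (by linarith) (by linarith),
      by rw [div_le_one (by linarith)]; linarith, ?_⟩
    have := div_mul_cancel₀ (x2 - x1) (by linarith : w - x1 ≠ 0)
    nlinarith [this]
  have hψmono : ∀ x1 x2, a ≤ x1 → x1 ≤ x2 → x2 ≤ tstar → h x1 + x1 ≤ h x2 + x2 := by
    intro x1 x2 h1 h12 h2t
    rcases eq_or_lt_of_le (h12.trans h2t) with heq | hlt
    · have : x1 = x2 := le_antisymm h12 (heq ▸ h2t)
      rw [this]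
    · obtain ⟨s, hs0, hs1, hsum⟩ := hparam x1 x2 tstar hlt h12 h2t
      have hx1 : x1 ∈ Set.Icc a a' := ⟨h1, by linarith [htmem.2]⟩
      have hx2 : x2 ∈ Set.Icc a a' := ⟨by linarith, by linarith [htmem.2]⟩
      have hc2 := (hcombo x1 x2 tstar hx1 htmem hx2 s hs0 hs1 hsum).2
      have hb1 := hψc x1 hx1
      nlinarith [hψt]
  have hψanti : ∀ x1 x2, tstar ≤ x1 → x1 ≤ x2 → x2 ≤ a' → h x2 + x2 ≤ h x1 + x1 := by
    intro x1 x2 ht1 h12 h2a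
    rcases eq_or_lt_of_le (ht1.trans h12) with heq | hlt
    · have : x1 = x2 := le_antisymm h12 (heq.symm ▸ ht1 : x2 ≤ x1)
      rw [this]
    · obtain ⟨s, hs0, hs1, hsum⟩ := hparam tstar x1 x2 hlt ht1 h12
      have hx1 : x1 ∈ Set.Icc a a' := ⟨by linarith [htmem.1], by linarith⟩
      have hx2 : x2 ∈ Set.Icc a a' := ⟨by linarith [htmem.1], h2a⟩
      have hc2 := (hcombo tstar x1 x2 htmem hx2 hx1 s hs0 hs1 hsum).2
      have hb2 := hψc x2 hx2
      nlinarith [hψt]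
  have hganti : ∀ x1 x2, a ≤ x1 → x1 ≤ x2 → x2 ≤ ustar → g x2 ≤ g x1 := by
    intro x1 x2 h1 h12 h2u
    rcases eq_or_lt_of_le (h12.trans h2u) with heq | hlt
    · have : x1 = x2 := le_antisymm h12 (heq ▸ h2u)
      rw [this]
    · obtain ⟨s, hs0, hs1, hsum⟩ := hparam x1 x2 ustar hlt h12 h2u
      have hx1 : x1 ∈ Set.Icc a a' := ⟨h1, by linarith [humem.2]⟩
      have hx2 : x2 ∈ Set.Icc a a' := ⟨by linarith, by linarith [humem.2]⟩
      have hc1 := (hcombo x1 x2 ustar hx1 humem hx2 s hs0 hs1 hsum).1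
      have hb1 := hgb x1 hx1
      nlinarith [hgu]
  have hgmono : ∀ x1 x2, ustar ≤ x1 → x1 ≤ x2 → x2 ≤ a' → g x1 ≤ g x2 := by
    intro x1 x2 hu1 h12 h2a
    rcases eq_or_lt_of_le (hu1.trans h12) with heq | hlt
    · have : x1 = x2 := le_antisymm h12 (heq.symm ▸ hu1 : x2 ≤ x1)
      rw [this]
    · obtain ⟨s, hs0, hs1, hsum⟩ := hparam ustar x1 x2 hlt hu1 h12
      have hx1 : x1 ∈ Set.Icc a a' := ⟨by linarith [humem.1], by linarith⟩
      have hx2 : x2 ∈ Set.Icc a a' := ⟨by linarith [humem.1], h2a⟩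
      have hc1 := (hcombo ustar x1 x2 humem hx2 hx1 s hs0 hs1 hsum).1
      have hb2 := hgb x2 hx2
      nlinarith [hgu]
  have hslKout : ∀ x ∉ Set.Icc a a', MixedAreaAux.sl K x = ∅ := by
    intro x hx
    rw [Set.eq_empty_iff_forall_notMem]
    intro y hy
    exact hx ⟨hfst_lb (x, y) hy, hfst_ub (x, y) hy⟩
  have hcab : a + b ≤ c := by
    have h1 := hfst_lb pa hpaK
    have h2 := hsnd_lb pa hpaK
    have h3 := hsum_ub pa hpaK
    linarith
  clear_value a a' b c g h tstar ustar
  clear hadef ha'def hbdef hcdef hgdef hhdef htsdef husdef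
  clear hKfst hKsnd hKsum hpaK hpa hpa'K hpa' hpbK hpb hpcK hpc
  clear pa pa' pb pc hslne hslcomp hcombo hparam
  -- the Minkowski sum
  set A := K + stdTriangle with hAdef
  have hAconv : Convex ℝ A := hconv.add MixedAreaAux.stdTriangle_convex
  have hAcomp : IsCompact A := hcomp.add MixedAreaAux.stdTriangle_compact
  set Hfun : ℝ → ℝ := fun x =>
    (if x ≤ tstar then h x + x else if x ≤ tstar + 1 then c else h (x-1) + (x-1)) + 1 - x
    with hHdef
  set Gfun : ℝ → ℝ := fun x =>
    if x ≤ ustar then g x else if x ≤ ustar + 1 then b else g (x-1) with hGdef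
  have hmemA : ∀ (p q : ℝ × ℝ), p ∈ K → q ∈ stdTriangle → p + q ∈ A := fun p q hp hq =>
    Set.add_mem_add hp hq
  have hHmem : ∀ x ∈ Set.Icc a (a' + 1), (x, Hfun x) ∈ A := by
    intro x hx
    by_cases h1 : x ≤ tstar
    · have hxm : x ∈ Set.Icc a a' := ⟨hx.1, h1.trans htmem.2⟩
      have heq : (x, Hfun x) = (x, h x) + ((0:ℝ), (1:ℝ)) := by
        apply Prod.ext
        · simp
        · simp only [hHdef, Prod.snd_add]
          rw [if_pos h1]; ring
      rw [heq]
      exact hmemA _ _ (hhK x hxm)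
        (MixedAreaAux.mem_stdTriangle (by norm_num) (by norm_num) (by norm_num))
    · by_cases h2 : x ≤ tstar + 1
      · push_neg at h1
        have heq : (x, Hfun x) = (tstar, h tstar) + (x - tstar, 1 - (x - tstar)) := by
          apply Prod.ext
          · show x = tstar + (x - tstar); ring
          · simp only [hHdef, Prod.snd_add]
            rw [if_neg (by linarith), if_pos h2]
            linarith [hψt]
        rw [heq]
        exact hmemA _ _ (hhK tstar htmem)
          (MixedAreaAux.mem_stdTriangle (by show (0:ℝ) ≤ x - tstar; linarith)
            (by show (0:ℝ) ≤ 1 - (x - tstar); linarith)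
            (by show x - tstar + (1 - (x - tstar)) ≤ 1; linarith))
      · push_neg at h1 h2
        have hxm : x - 1 ∈ Set.Icc a a' := ⟨by linarith [htmem.1], by linarith [hx.2]⟩
        have heq : (x, Hfun x) = (x - 1, h (x-1)) + ((1:ℝ), (0:ℝ)) := by
          apply Prod.ext
          · show x = x - 1 + 1; ring
          · simp only [hHdef, Prod.snd_add]
            rw [if_neg (by linarith), if_neg (by linarith)]; ring
        rw [heq]
        exact hmemA _ _ (hhK _ hxm)
          (MixedAreaAux.mem_stdTriangle (by norm_num) (by norm_num) (by norm_num))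
  have hGmem : ∀ x ∈ Set.Icc a (a' + 1), (x, Gfun x) ∈ A := by
    intro x hx
    by_cases h1 : x ≤ ustar
    · have hxm : x ∈ Set.Icc a a' := ⟨hx.1, h1.trans humem.2⟩
      have heq : (x, Gfun x) = (x, g x) + ((0:ℝ), (0:ℝ)) := by
        apply Prod.ext
        · simp
        · simp only [hGdef, Prod.snd_add]
          rw [if_pos h1]; ring
      rw [heq]
      exact hmemA _ _ (hgK x hxm)
        (MixedAreaAux.mem_stdTriangle (by norm_num) (by norm_num) (by norm_num))
    · by_cases h2 : x ≤ ustar + 1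
      · push_neg at h1
        have heq : (x, Gfun x) = (ustar, g ustar) + (x - ustar, (0:ℝ)) := by
          apply Prod.ext
          · show x = ustar + (x - ustar); ring
          · simp only [hGdef, Prod.snd_add]
            rw [if_neg (by linarith), if_pos h2, hgu]; ring
        rw [heq]
        exact hmemA _ _ (hgK ustar humem)
          (MixedAreaAux.mem_stdTriangle (by show (0:ℝ) ≤ x - ustar; linarith)
            (by norm_num) (by show x - ustar + 0 ≤ 1; linarith))
      · push_neg at h1 h2
        have hxm : x - 1 ∈ Set.Icc a a' := ⟨by linarith [humem.1], by linarith [hx.2]⟩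
        have heq : (x, Gfun x) = (x - 1, g (x-1)) + ((1:ℝ), (0:ℝ)) := by
          apply Prod.ext
          · show x = x - 1 + 1; ring
          · simp only [hGdef, Prod.snd_add]
            rw [if_neg (by linarith), if_neg (by linarith)]; ring
        rw [heq]
        exact hmemA _ _ (hgK _ hxm)
          (MixedAreaAux.mem_stdTriangle (by norm_num) (by norm_num) (by norm_num))
  have hbound : ∀ x y : ℝ, (x, y) ∈ A →
      x ∈ Set.Icc a (a' + 1) ∧ Gfun x ≤ y ∧ y ≤ Hfun x := by
    intro x y hxy
    obtain ⟨p, hp, q, hq, hpq⟩ := Set.mem_add.mp hxy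
    obtain ⟨hq1, hq2, hq12⟩ := MixedAreaAux.stdTriangle_subset hq
    have he1 : p.1 + q.1 = x := by
      have := congrArg Prod.fst hpq; simpa using this
    have he2 : p.2 + q.2 = y := by
      have := congrArg Prod.snd hpq; simpa using this
    have hpm : p.1 ∈ Set.Icc a a' := ⟨hfst_lb p hp, hfst_ub p hp⟩
    have hgp := hmemle p.1 hpm p hp rfl
    have hq1' : q.1 ≤ 1 := by linarith
    refine ⟨⟨by linarith [hpm.1], by linarith [hpm.2]⟩, ?_, ?_⟩
    · simp only [hGdef]
      split_ifs with h1 h2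
      · have := hganti p.1 x hpm.1 (by linarith) h1
        linarith [hgp.1]
      · have := hgb p.1 hpm
        linarith [hgp.1]
      · push_neg at h1 h2
        have := hgmono (x - 1) p.1 (by linarith) (by linarith) hpm.2
        linarith [hgp.1]
    · simp only [hHdef]
      split_ifs with h1 h2
      · have := hψmono p.1 x hpm.1 (by linarith) h1
        linarith [hgp.2]
      · have := hψc p.1 hpm
        linarith [hgp.2]
      · push_neg at h1 h2
        have := hψanti (x - 1) p.1 (by linarith) (by linarith) hpm.2
        linarith [hgp.2]
  have hslA : ∀ x ∈ Set.Icc a (a' + 1),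
      MixedAreaAux.sl A x = Set.Icc (Gfun x) (Hfun x) := by
    intro x hx
    ext y
    constructor
    · intro hy
      exact ⟨(hbound x y hy).2.1, (hbound x y hy).2.2⟩
    · intro hy
      exact MixedAreaAux.mem_of_between hAconv (hGmem x hx) (hHmem x hx) hy
  have hslAout : ∀ x ∉ Set.Icc a (a' + 1), MixedAreaAux.sl A x = ∅ := by
    intro x hx
    rw [Set.eq_empty_iff_forall_notMem]
    intro y hy
    exact hx (hbound x y hy).1
  have hGHle : ∀ x ∈ Set.Icc a (a' + 1), Gfun x ≤ Hfun x := by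
    intro x hx
    exact ((hbound x (Gfun x) (hGmem x hx)).2.2)
  clear_value A Hfun Gfun
  clear hAdef
  -- integrability of the slice endpoint functions of K
  have huIcc1 : Set.uIcc a tstar = Set.Icc a tstar := Set.uIcc_of_le htmem.1
  have huIcc2 : Set.uIcc tstar a' = Set.Icc tstar a' := Set.uIcc_of_le htmem.2
  have hψint1 : IntervalIntegrable (fun x => h x + x) volume a tstar := by
    apply MonotoneOn.intervalIntegrable
    rw [huIcc1]
    intro u hu v hv huv
    exact hψmono u v hu.1 huv hv.2
  have hψint2 : IntervalIntegrable (fun x => h x + x) volume tstar a' := by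
    apply AntitoneOn.intervalIntegrable
    rw [huIcc2]
    intro u hu v hv huv
    exact hψanti u v hu.1 huv hv.2
  have hidint : ∀ u v : ℝ, IntervalIntegrable (fun x : ℝ => x) volume u v :=
    fun u v => continuous_id.intervalIntegrable u v
  have hhint1 : IntervalIntegrable h volume a tstar := by
    have := hψint1.sub (hidint a tstar)
    simpa using this
  have hhint2 : IntervalIntegrable h volume tstar a' := by
    have := hψint2.sub (hidint tstar a')
    simpa using this
  have hhint : IntervalIntegrable h volume a a' := hhint1.trans hhint2
  have hguIcc1 : Set.uIcc a ustar = Set.Icc a ustar := Set.uIcc_of_le humem.1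
  have hguIcc2 : Set.uIcc ustar a' = Set.Icc ustar a' := Set.uIcc_of_le humem.2
  have hgint1 : IntervalIntegrable g volume a ustar := by
    apply AntitoneOn.intervalIntegrable
    rw [hguIcc1]
    intro u hu v hv huv
    exact hganti u v hu.1 huv hv.2
  have hgint2 : IntervalIntegrable g volume ustar a' := by
    apply MonotoneOn.intervalIntegrable
    rw [hguIcc2]
    intro u hu v hv huv
    exact hgmono u v hu.1 huv hv.2
  have hgint : IntervalIntegrable g volume a a' := hgint1.trans hgint2
  have hVint : IntervalIntegrable (fun x => h x - g x) volume a a' := hhint.sub hgint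
  have hvolK : volume K = ENNReal.ofReal (∫ x in a..a', (h x - g x)) :=
    MixedAreaAux.volume_eq_of_slices hcomp.measurableSet haa' hslK hslKout hgh hVint
  -- integrability of Hfun and Gfun
  have hH1 : IntervalIntegrable Hfun volume a tstar := by
    have base : IntervalIntegrable (fun x => h x + 1) volume a tstar :=
      hhint1.add intervalIntegrable_const
    rw [intervalIntegrable_iff] at base ⊢
    refine base.congr_fun ?_ measurableSet_uIoc
    intro x hx
    rw [Set.uIoc_of_le htmem.1] at hx
    simp only [hHdef]
    rw [if_pos hx.2]; ring
  have hH2 : IntervalIntegrable Hfun volume tstar (tstar + 1) := by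
    have base : IntervalIntegrable (fun x => c + 1 - x) volume tstar (tstar + 1) :=
      Continuous.intervalIntegrable (by continuity) _ _
    rw [intervalIntegrable_iff] at base ⊢
    refine base.congr_fun ?_ measurableSet_uIoc
    intro x hx
    rw [Set.uIoc_of_le (by linarith : tstar ≤ tstar + 1)] at hx
    simp only [hHdef]
    rw [if_neg (by linarith [hx.1] : ¬ x ≤ tstar), if_pos hx.2]
  have hψshift : IntervalIntegrable (fun x => h (x - 1) + (x - 1)) volume (tstar + 1) (a' + 1) := by
    apply AntitoneOn.intervalIntegrable
    rw [Set.uIcc_of_le (by linarith [htmem.2] : tstar + 1 ≤ a' + 1)]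
    intro u hu v hv huv
    exact hψanti (u - 1) (v - 1) (by linarith [hu.1]) (by linarith) (by linarith [hv.2])
  have hH3 : IntervalIntegrable Hfun volume (tstar + 1) (a' + 1) := by
    have base := (hψshift.add (intervalIntegrable_const (c := (1:ℝ)))).sub (hidint (tstar + 1) (a' + 1))
    rw [intervalIntegrable_iff] at base ⊢
    refine base.congr_fun ?_ measurableSet_uIoc
    intro x hx
    rw [Set.uIoc_of_le (by linarith [htmem.2])] at hx
    simp only [hHdef]
    rw [if_neg (by linarith [hx.1] : ¬ x ≤ tstar), if_neg (by linarith [hx.1] : ¬ x ≤ tstar + 1)]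
  have hHint : IntervalIntegrable Hfun volume a (a' + 1) := (hH1.trans hH2).trans hH3
  have hG1 : IntervalIntegrable Gfun volume a ustar := by
    have base := hgint1
    rw [intervalIntegrable_iff] at base ⊢
    refine base.congr_fun ?_ measurableSet_uIoc
    intro x hx
    rw [Set.uIoc_of_le humem.1] at hx
    simp only [hGdef]
    rw [if_pos hx.2]
  have hG2 : IntervalIntegrable Gfun volume ustar (ustar + 1) := by
    have base : IntervalIntegrable (fun _ : ℝ => b) volume ustar (ustar + 1) :=
      intervalIntegrable_const
    rw [intervalIntegrable_iff] at base ⊢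
    refine base.congr_fun ?_ measurableSet_uIoc
    intro x hx
    rw [Set.uIoc_of_le (by linarith : ustar ≤ ustar + 1)] at hx
    simp only [hGdef]
    rw [if_neg (by linarith [hx.1] : ¬ x ≤ ustar), if_pos hx.2]
  have hgshift : IntervalIntegrable (fun x => g (x - 1)) volume (ustar + 1) (a' + 1) := by
    apply MonotoneOn.intervalIntegrable
    rw [Set.uIcc_of_le (by linarith [humem.2] : ustar + 1 ≤ a' + 1)]
    intro u hu v hv huv
    exact hgmono (u - 1) (v - 1) (by linarith [hu.1]) (by linarith) (by linarith [hv.2])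
  have hG3 : IntervalIntegrable Gfun volume (ustar + 1) (a' + 1) := by
    have base := hgshift
    rw [intervalIntegrable_iff] at base ⊢
    refine base.congr_fun ?_ measurableSet_uIoc
    intro x hx
    rw [Set.uIoc_of_le (by linarith [humem.2])] at hx
    simp only [hGdef]
    rw [if_neg (by linarith [hx.1] : ¬ x ≤ ustar), if_neg (by linarith [hx.1] : ¬ x ≤ ustar + 1)]
  have hGint : IntervalIntegrable Gfun volume a (a' + 1) := (hG1.trans hG2).trans hG3
  have hABint : IntervalIntegrable (fun x => Hfun x - Gfun x) volume a (a' + 1) :=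
    hHint.sub hGint
  have hvolA : volume A = ENNReal.ofReal (∫ x in a..(a' + 1), (Hfun x - Gfun x)) :=
    MixedAreaAux.volume_eq_of_slices hAcomp.measurableSet (by linarith : a ≤ a' + 1)
      hslA hslAout hGHle hABint
  -- computing the integrals
  have hIH : (∫ x in a..(a' + 1), Hfun x) = (∫ x in a..a', h x) + (c + 1 / 2 - a) := by
    have hsplit : (∫ x in a..tstar, Hfun x) + (∫ x in tstar..(tstar + 1), Hfun x)
        = ∫ x in a..(tstar + 1), Hfun x :=
      intervalIntegral.integral_add_adjacent_intervals hH1 hH2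
    have hsplit2 : (∫ x in a..(tstar + 1), Hfun x) + (∫ x in (tstar + 1)..(a' + 1), Hfun x)
        = ∫ x in a..(a' + 1), Hfun x :=
      intervalIntegral.integral_add_adjacent_intervals (hH1.trans hH2) hH3
    have e1 : (∫ x in a..tstar, Hfun x) = (∫ x in a..tstar, (h x + 1)) := by
      apply intervalIntegral.integral_congr
      intro x hx
      rw [huIcc1] at hx
      simp only [hHdef]
      rw [if_pos hx.2]; ring
    have e1' : (∫ x in a..tstar, (h x + 1)) = (∫ x in a..tstar, h x) + (tstar - a) := by
      rw [intervalIntegral.integral_add hhint1 intervalIntegrable_const,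
        intervalIntegral.integral_const]
      simp
    have e2 : (∫ x in tstar..(tstar + 1), Hfun x) = c + 1 / 2 - tstar := by
      have he : (∫ x in tstar..(tstar + 1), Hfun x) = (∫ x in tstar..(tstar + 1), (c + 1 - x)) := by
        apply intervalIntegral.integral_congr
        intro x hx
        rw [Set.uIcc_of_le (by linarith : tstar ≤ tstar + 1)] at hx
        simp only [hHdef]
        by_cases hxt : x ≤ tstar
        · have hxeq : x = tstar := le_antisymm hxt hx.1
          rw [if_pos hxt, hxeq]
          linarith [hψt]
        · rw [if_neg hxt, if_pos hx.2]
      have hconst_int : IntervalIntegrable (fun _ : ℝ => c + 1) volume tstar (tstar + 1) :=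
        intervalIntegrable_const
      rw [he, show (∫ x in tstar..(tstar + 1), (c + 1 - x))
          = (∫ _ in tstar..(tstar + 1), (c + 1)) - ∫ x in tstar..(tstar + 1), x from
          intervalIntegral.integral_sub hconst_int (hidint _ _),
        intervalIntegral.integral_const, integral_id]
      simp only [smul_eq_mul]
      ring
    have e3 : (∫ x in (tstar + 1)..(a' + 1), Hfun x) = ∫ x in tstar..a', h x := by
      have he : (∫ x in (tstar + 1)..(a' + 1), Hfun x)
          = (∫ x in (tstar + 1)..(a' + 1), h (x - 1)) := by
        apply intervalIntegral.integral_congr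
        intro x hx
        rw [Set.uIcc_of_le (by linarith [htmem.2] : tstar + 1 ≤ a' + 1)] at hx
        simp only [hHdef]
        by_cases hxt : x ≤ tstar + 1
        · have hxeq : x = tstar + 1 := le_antisymm hxt hx.1
          rw [if_neg (by linarith : ¬ x ≤ tstar), if_pos hxt, hxeq]
          have h11 : tstar + 1 - 1 = tstar := by ring
          rw [h11]
          linarith [hψt]
        · rw [if_neg (by linarith [hx.1] : ¬ x ≤ tstar), if_neg hxt]
          ring
      rw [he]
      have hc := intervalIntegral.integral_comp_sub_right (a := tstar + 1) (b := a' + 1)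
        (fun x => h x) 1
      simpa using hc
    have hjoin : (∫ x in a..tstar, h x) + (∫ x in tstar..a', h x) = ∫ x in a..a', h x :=
      intervalIntegral.integral_add_adjacent_intervals hhint1 hhint2
    rw [← hsplit2, ← hsplit, e1, e1', e2, e3]
    linarith [hjoin]
  have hIG : (∫ x in a..(a' + 1), Gfun x) = (∫ x in a..a', g x) + b := by
    have hsplit : (∫ x in a..ustar, Gfun x) + (∫ x in ustar..(ustar + 1), Gfun x)
        = ∫ x in a..(ustar + 1), Gfun x :=
      intervalIntegral.integral_add_adjacent_intervals hG1 hG2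
    have hsplit2 : (∫ x in a..(ustar + 1), Gfun x) + (∫ x in (ustar + 1)..(a' + 1), Gfun x)
        = ∫ x in a..(a' + 1), Gfun x :=
      intervalIntegral.integral_add_adjacent_intervals (hG1.trans hG2) hG3
    have e1 : (∫ x in a..ustar, Gfun x) = (∫ x in a..ustar, g x) := by
      apply intervalIntegral.integral_congr
      intro x hx
      rw [hguIcc1] at hx
      simp only [hGdef]
      rw [if_pos hx.2]
    have e2 : (∫ x in ustar..(ustar + 1), Gfun x) = b := by
      have he : (∫ x in ustar..(ustar + 1), Gfun x) = (∫ x in ustar..(ustar + 1), b) := by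
        apply intervalIntegral.integral_congr
        intro x hx
        rw [Set.uIcc_of_le (by linarith : ustar ≤ ustar + 1)] at hx
        simp only [hGdef]
        by_cases hxt : x ≤ ustar
        · have hxeq : x = ustar := le_antisymm hxt hx.1
          rw [if_pos hxt, hxeq, hgu]
        · rw [if_neg hxt, if_pos hx.2]
      rw [he, intervalIntegral.integral_const]
      simp
    have e3 : (∫ x in (ustar + 1)..(a' + 1), Gfun x) = ∫ x in ustar..a', g x := by
      have he : (∫ x in (ustar + 1)..(a' + 1), Gfun x)
          = (∫ x in (ustar + 1)..(a' + 1), g (x - 1)) := by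
        apply intervalIntegral.integral_congr
        intro x hx
        rw [Set.uIcc_of_le (by linarith [humem.2] : ustar + 1 ≤ a' + 1)] at hx
        simp only [hGdef]
        by_cases hxt : x ≤ ustar + 1
        · have hxeq : x = ustar + 1 := le_antisymm hxt hx.1
          rw [if_neg (by linarith : ¬ x ≤ ustar), if_pos hxt, hxeq]
          have h11 : ustar + 1 - 1 = ustar := by ring
          rw [h11, hgu]
        · rw [if_neg (by linarith [hx.1] : ¬ x ≤ ustar), if_neg hxt]
      rw [he]
      have hc := intervalIntegral.integral_comp_sub_right (a := ustar + 1) (b := a' + 1)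
        (fun x => g x) 1
      simpa using hc
    have hjoin : (∫ x in a..ustar, g x) + (∫ x in ustar..a', g x) = ∫ x in a..a', g x :=
      intervalIntegral.integral_add_adjacent_intervals hgint1 hgint2
    rw [← hsplit2, ← hsplit, e1, e2, e3]
    linarith [hjoin]
  have hIHG : (∫ x in a..(a' + 1), (Hfun x - Gfun x))
      = (∫ x in a..a', (h x - g x)) + (1 / 2 + (c - a - b)) := by
    rw [intervalIntegral.integral_sub hHint hGint, hIH, hIG,
      intervalIntegral.integral_sub hhint hgint]
    ring
  have hV0 : 0 ≤ ∫ x in a..a', (h x - g x) :=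
    intervalIntegral.integral_nonneg haa' (fun u hu => sub_nonneg.2 (hgh u hu))
  rw [hvolA, hvolK, hIHG, ENNReal.toReal_ofReal (by linarith : (0:ℝ) ≤ (∫ x in a..a', (h x - g x)) + (1 / 2 + (c - a - b))), ENNReal.toReal_ofReal hV0]
  ring

end Core

namespace MixedAreaAux

lemma mem_dilate {δ : ℝ} (hδ : 0 ≤ δ) {q : ℝ × ℝ} (h1 : 0 ≤ q.1) (h2 : 0 ≤ q.2)
    (h3 : q.1 + q.2 ≤ δ) : q ∈ δ • stdTriangle := by
  rcases eq_or_lt_of_le hδ with h0 | h0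
  · have hq1 : q.1 = 0 := le_antisymm (by linarith) h1
    have hq2 : q.2 = 0 := le_antisymm (by linarith) h2
    have hkne : stdTriangle.Nonempty :=
      ⟨((0:ℝ), (0:ℝ)), mem_stdTriangle (by norm_num) (by norm_num) (by norm_num)⟩
    rw [← h0, Set.zero_smul_set hkne]
    have : q = ((0:ℝ), (0:ℝ)) := Prod.ext hq1 hq2
    simp [this]
  · rw [Set.mem_smul_set]
    refine ⟨(q.1 / δ, q.2 / δ), mem_stdTriangle (div_nonneg h1 h0.le) (div_nonneg h2 h0.le)
      (by rw [← add_div, div_le_one h0]; exact h3), ?_⟩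
    apply Prod.ext <;> simp only [Prod.smul_fst, Prod.smul_snd, smul_eq_mul] <;>
      field_simp

lemma smul_stdTriangle_subset {δ : ℝ} (hδ : 0 ≤ δ) :
    δ • stdTriangle ⊆ {r : ℝ × ℝ | 0 ≤ r.1 ∧ 0 ≤ r.2 ∧ r.1 + r.2 ≤ δ} := by
  intro r hr
  obtain ⟨q, hq, rfl⟩ := Set.mem_smul_set.mp hr
  obtain ⟨hq1, hq2, hq12⟩ := stdTriangle_subset hq
  refine ⟨?_, ?_, ?_⟩ <;>
    simp only [Prod.smul_fst, Prod.smul_snd, smul_eq_mul]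
  · positivity
  · positivity
  · nlinarith

lemma volume_stdTriangle_toReal : (volume stdTriangle).toReal = 1 / 2 := by
  have h := core (convex_singleton ((0:ℝ), (0:ℝ))) isCompact_singleton
    (Set.singleton_nonempty _)
  have h1 : ({((0:ℝ), (0:ℝ))} : Set (ℝ × ℝ)) + stdTriangle = stdTriangle := by
    rw [Set.singleton_add]
    simp
    ext p
    simp only [Set.mem_preimage]
    rw [show ((0:ℝ), (0:ℝ)) + p = p from Prod.ext (by simp) (by simp)]
  have h2 : volume ({((0:ℝ), (0:ℝ))} : Set (ℝ × ℝ)) = 0 := by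
    rw [← Set.singleton_prod_singleton, Measure.volume_eq_prod, Measure.prod_prod,
      Real.volume_singleton, zero_mul]
  rw [h1, h2] at h
  simpa using h

end MixedAreaAux

/-- For a lattice polytope `P`, the mixed area `V(P,Δ₂)` is the smallest non-negative integer
`δ` such that some lattice translate of `P` is contained in the dilate `δ·Δ₂`. -/
theorem mixedArea_stdTriangle (P : Set (ℝ × ℝ)) (hP : IsLatticePolytope P) :
    ∃ n : ℕ, mixedArea P stdTriangle = (n : ℝ) ∧
      IsLeast {δ : ℕ | ∃ t : ℤ × ℤ,
        (fun x : ℝ × ℝ => x + latticeEmbed t) '' P ⊆ (δ : ℝ) • stdTriangle} n := by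
  classical
  obtain ⟨S, hSne, hPS⟩ := hP
  set aZ : ℤ := S.inf' hSne (fun p => p.1) with haZ
  set bZ : ℤ := S.inf' hSne (fun p => p.2) with hbZ
  set cZ : ℤ := S.sup' hSne (fun p => p.1 + p.2) with hcZ
  obtain ⟨sa, hsaS, hsa⟩ : ∃ s ∈ S, (s : ℤ × ℤ).1 = aZ := by
    obtain ⟨i, hi, hie⟩ := S.exists_mem_eq_inf' hSne (fun p => p.1)
    exact ⟨i, hi, hie.symm⟩
  obtain ⟨sb, hsbS, hsb⟩ : ∃ s ∈ S, (s : ℤ × ℤ).2 = bZ := by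
    obtain ⟨i, hi, hie⟩ := S.exists_mem_eq_inf' hSne (fun p => p.2)
    exact ⟨i, hi, hie.symm⟩
  obtain ⟨sc, hscS, hsc⟩ : ∃ s ∈ S, (s : ℤ × ℤ).1 + s.2 = cZ := by
    obtain ⟨i, hi, hie⟩ := S.exists_mem_eq_sup' hSne (fun p => p.1 + p.2)
    exact ⟨i, hi, hie.symm⟩
  have hinf1 : ∀ s ∈ S, aZ ≤ (s : ℤ × ℤ).1 := fun s hs => Finset.inf'_le _ hs
  have hinf2 : ∀ s ∈ S, bZ ≤ (s : ℤ × ℤ).2 := fun s hs => Finset.inf'_le _ hs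
  have hsup : ∀ s ∈ S, (s : ℤ × ℤ).1 + s.2 ≤ cZ := fun s hs => by rw [hcZ]; exact Finset.le_sup' (fun p : ℤ × ℤ => p.1 + p.2) hs
  have hmemP : ∀ s ∈ S, latticeEmbed s ∈ P := by
    intro s hs
    rw [hPS]
    exact subset_convexHull ℝ _ ⟨s, hs, rfl⟩
  have hPconv : Convex ℝ P := hPS ▸ convex_convexHull ℝ _
  have hPcomp : IsCompact P := by
    rw [hPS]
    exact (S.finite_toSet.image _).isCompact_convexHull ℝ
  have hPne : P.Nonempty := ⟨latticeEmbed sa, hmemP sa hsaS⟩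
  -- bounds on P
  have hlb1 : ∀ p ∈ P, (aZ : ℝ) ≤ p.1 := by
    intro p hp
    have := MixedAreaAux.hull_le (S := latticeEmbed '' (S : Set (ℤ × ℤ)))
      (α := -1) (β := 0) (r := -(aZ : ℝ)) ?_ p (hPS ▸ hp)
    · linarith
    · rintro q ⟨s, hs, rfl⟩
      have := hinf1 s hs
      simp only [latticeEmbed]
      push_cast
      have : (aZ : ℝ) ≤ (s.1 : ℝ) := by exact_mod_cast hinf1 s hs
      linarith
  have hlb2 : ∀ p ∈ P, (bZ : ℝ) ≤ p.2 := by
    intro p hp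
    have := MixedAreaAux.hull_le (S := latticeEmbed '' (S : Set (ℤ × ℤ)))
      (α := 0) (β := -1) (r := -(bZ : ℝ)) ?_ p (hPS ▸ hp)
    · linarith
    · rintro q ⟨s, hs, rfl⟩
      simp only [latticeEmbed]
      have : (bZ : ℝ) ≤ (s.2 : ℝ) := by exact_mod_cast hinf2 s hs
      linarith
  have hub : ∀ p ∈ P, p.1 + p.2 ≤ (cZ : ℝ) := by
    intro p hp
    have := MixedAreaAux.hull_le (S := latticeEmbed '' (S : Set (ℤ × ℤ)))
      (α := 1) (β := 1) (r := (cZ : ℝ)) ?_ p (hPS ▸ hp)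
    · linarith
    · rintro q ⟨s, hs, rfl⟩
      simp only [latticeEmbed]
      have : ((s.1 + s.2 : ℤ) : ℝ) ≤ (cZ : ℝ) := by exact_mod_cast hsup s hs
      push_cast at this
      linarith
  -- identification of the extrema
  have hfst_ne : (Prod.fst '' P).Nonempty := hPne.image _
  have hsnd_ne : (Prod.snd '' P).Nonempty := hPne.image _
  have hsum_ne : ((fun p : ℝ × ℝ => p.1 + p.2) '' P).Nonempty := hPne.image _
  have haP : sInf (Prod.fst '' P) = (aZ : ℝ) := by
    apply le_antisymm
    · exact csInf_le ⟨(aZ : ℝ), by rintro y ⟨p, hp, rfl⟩; exact hlb1 p hp⟩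
        ⟨latticeEmbed sa, hmemP sa hsaS, by simp [latticeEmbed, hsa]⟩
    · exact le_csInf hfst_ne (by rintro y ⟨p, hp, rfl⟩; exact hlb1 p hp)
  have hbP : sInf (Prod.snd '' P) = (bZ : ℝ) := by
    apply le_antisymm
    · exact csInf_le ⟨(bZ : ℝ), by rintro y ⟨p, hp, rfl⟩; exact hlb2 p hp⟩
        ⟨latticeEmbed sb, hmemP sb hsbS, by simp [latticeEmbed, hsb]⟩
    · exact le_csInf hsnd_ne (by rintro y ⟨p, hp, rfl⟩; exact hlb2 p hp)
  have hcP : sSup ((fun p : ℝ × ℝ => p.1 + p.2) '' P) = (cZ : ℝ) := by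
    apply le_antisymm
    · exact csSup_le hsum_ne (by rintro y ⟨p, hp, rfl⟩; exact hub p hp)
    · apply le_csSup ⟨(cZ : ℝ), by rintro y ⟨p, hp, rfl⟩; exact hub p hp⟩
      refine ⟨latticeEmbed sc, hmemP sc hscS, ?_⟩
      simp only [latticeEmbed]
      exact_mod_cast hsc
  -- the candidate
  have hnn : 0 ≤ cZ - aZ - bZ := by
    have h1 := hinf1 sc hscS
    have h2 := hinf2 sc hscS
    omega
  have hcast : (((cZ - aZ - bZ).toNat : ℕ) : ℝ) = (cZ : ℝ) - aZ - bZ := by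
    exact_mod_cast Int.toNat_of_nonneg hnn
  refine ⟨(cZ - aZ - bZ).toNat, ?_, ?_, ?_⟩
  · -- mixed area computation
    have hcore := core hPconv hPcomp hPne
    rw [haP, hbP, hcP] at hcore
    unfold mixedArea
    rw [hcore, MixedAreaAux.volume_stdTriangle_toReal, hcast]
    ring
  · -- membership: translate by (-aZ, -bZ)
    refine ⟨(-aZ, -bZ), ?_⟩
    rw [Set.image_subset_iff]
    have hDconv : Convex ℝ ((((cZ - aZ - bZ).toNat : ℕ) : ℝ) • stdTriangle) :=
      MixedAreaAux.stdTriangle_convex.smul _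
    have hnnR : (0:ℝ) ≤ (((cZ - aZ - bZ).toNat : ℕ) : ℝ) := Nat.cast_nonneg _
    rw [hPS]
    apply convexHull_min
    · rintro q ⟨s, hs, rfl⟩
      simp only [Set.mem_preimage]
      have hc1 : (aZ : ℝ) ≤ (s.1 : ℝ) := by exact_mod_cast hinf1 s hs
      have hc2 : (bZ : ℝ) ≤ (s.2 : ℝ) := by exact_mod_cast hinf2 s hs
      have hc3 : (s.1 : ℝ) + (s.2 : ℝ) ≤ (cZ : ℝ) := by exact_mod_cast hsup s hs
      apply MixedAreaAux.mem_dilate hnnR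
      · show (0:ℝ) ≤ (latticeEmbed s + latticeEmbed (-aZ, -bZ)).1
        simp only [latticeEmbed, Prod.fst_add]
        push_cast
        linarith
      · show (0:ℝ) ≤ (latticeEmbed s + latticeEmbed (-aZ, -bZ)).2
        simp only [latticeEmbed, Prod.snd_add]
        push_cast
        linarith
      · show (latticeEmbed s + latticeEmbed (-aZ, -bZ)).1
            + (latticeEmbed s + latticeEmbed (-aZ, -bZ)).2 ≤ _
        simp only [latticeEmbed, Prod.fst_add, Prod.snd_add]
        rw [hcast]
        push_cast
        linarith
    · intro x hx y hy s t hs ht hst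
      simp only [Set.mem_preimage] at hx hy ⊢
      have key : (s • x + t • y) + latticeEmbed (-aZ, -bZ)
          = s • (x + latticeEmbed (-aZ, -bZ)) + t • (y + latticeEmbed (-aZ, -bZ)) := by
        apply Prod.ext
        · simp only [Prod.fst_add, Prod.smul_fst, smul_eq_mul]
          linear_combination (-(latticeEmbed (-aZ, -bZ)).1) * hst
        · simp only [Prod.snd_add, Prod.smul_snd, smul_eq_mul]
          linear_combination (-(latticeEmbed (-aZ, -bZ)).2) * hst
      rw [key]
      exact hDconv hx hy hs ht hst
  · -- lower bound
    rintro δ ⟨t, ht⟩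
    have hsub := MixedAreaAux.smul_stdTriangle_subset (δ := (δ : ℝ)) (Nat.cast_nonneg δ)
    have key : ∀ s ∈ S, 0 ≤ (s.1 : ℝ) + t.1 ∧ 0 ≤ (s.2 : ℝ) + t.2
        ∧ ((s.1 : ℝ) + t.1) + ((s.2 : ℝ) + t.2) ≤ (δ : ℝ) := by
      intro s hs
      have himg : latticeEmbed s + latticeEmbed t ∈ (δ : ℝ) • stdTriangle :=
        ht ⟨latticeEmbed s, hmemP s hs, rfl⟩
      have hb := hsub himg
      obtain ⟨hb1, hb2, hb3⟩ := hb
      simp only [latticeEmbed, Prod.fst_add, Prod.snd_add] at hb1 hb2 hb3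
      exact ⟨hb1, hb2, hb3⟩
    obtain ⟨h1, -, -⟩ := key sa hsaS
    obtain ⟨-, h2, -⟩ := key sb hsbS
    obtain ⟨-, -, h3⟩ := key sc hscS
    rw [hsa] at h1
    rw [hsb] at h2
    have h3' : (cZ : ℝ) + ((t.1 : ℝ) + (t.2 : ℝ)) ≤ (δ : ℝ) := by
      have hce : ((sc.1 : ℝ) + (sc.2 : ℝ)) = (cZ : ℝ) := by exact_mod_cast hsc
      linarith
    have hZ : ((cZ - aZ - bZ : ℤ) : ℝ) ≤ ((δ : ℤ) : ℝ) := by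
      push_cast
      linarith
    have hZ' : cZ - aZ - bZ ≤ (δ : ℤ) := by exact_mod_cast hZ
    omega
end

section
/- Let (v₁₂, v₁₃, v₂₃) ∈ ℤ≥0³ be any triple of non-negative integers. Then there exist lattice polytopes P₁, P₂, P₃ in ℝ² such that V(P₁,P₂) = v₁₂, V(P₁,P₃) = v₁₃, and V(P₂,P₃) = v₂₃. -/
open MeasureTheory Pointwise

/-- segment from origin to a lattice point -/
noncomputable def seg (u : ℤ × ℤ) : Set (ℝ × ℝ) := segment ℝ 0 (latticeEmbed u)

lemma seg_poly (u : ℤ × ℤ) : IsLatticePolytope (seg u) := by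
  refine ⟨{(0,0), u}, ⟨(0,0), by simp⟩, ?_⟩
  rw [seg, ← convexHull_pair]
  congr 1
  rw [Finset.coe_insert, Finset.coe_singleton, Set.image_insert_eq, Set.image_singleton]
  have : latticeEmbed (0, 0) = 0 := by simp [latticeEmbed]
  rw [this]

lemma seg_zero (u : ℤ × ℤ) : latticeEmbed u = ((u.1 : ℝ), (u.2 : ℝ)) := rfl

noncomputable def shearMap (a b : ℝ × ℝ) : (ℝ × ℝ) →ₗ[ℝ] (ℝ × ℝ) :=
  (LinearMap.fst ℝ ℝ ℝ).smulRight a + (LinearMap.snd ℝ ℝ ℝ).smulRight b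

lemma shearMap_apply (a b : ℝ × ℝ) (p : ℝ × ℝ) :
    shearMap a b p = p.1 • a + p.2 • b := rfl

lemma shearMap_det (a b : ℝ × ℝ) : (shearMap a b).det = a.1 * b.2 - a.2 * b.1 := by
  rw [← LinearMap.det_toMatrix (Module.Basis.finTwoProd ℝ), Matrix.det_fin_two]
  simp [LinearMap.toMatrix_apply, Module.Basis.coe_finTwoProd_repr, shearMap_apply,
    Module.Basis.finTwoProd_zero, Module.Basis.finTwoProd_one]
  ring

lemma seg_eq_image (u : ℤ × ℤ) :
    seg u = shearMap (latticeEmbed u) 0 '' (Set.Icc 0 1 ×ˢ ({0} : Set ℝ)) := by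
  rw [seg, segment_eq_image]
  ext z
  simp only [Set.mem_image, Set.mem_prod, Set.mem_Icc, Set.mem_singleton_iff, shearMap_apply]
  constructor
  · rintro ⟨t, ht, rfl⟩
    exact ⟨(t, 0), ⟨ht, rfl⟩, by simp⟩
  · rintro ⟨⟨s, t⟩, ⟨hs, rfl⟩, rfl⟩
    exact ⟨s, hs, by simp⟩

lemma seg_add_eq_image (u v : ℤ × ℤ) :
    seg u + seg v
      = shearMap (latticeEmbed u) (latticeEmbed v) '' (Set.Icc 0 1 ×ˢ Set.Icc (0:ℝ) 1) := by
  rw [seg, seg, segment_eq_image, segment_eq_image]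
  ext z
  simp only [Set.mem_add, Set.mem_image, Set.mem_prod, Set.mem_Icc, shearMap_apply]
  constructor
  · rintro ⟨x, ⟨s, hs, rfl⟩, y, ⟨t, ht, rfl⟩, rfl⟩
    exact ⟨(s, t), ⟨hs, ht⟩, by simp⟩
  · rintro ⟨⟨s, t⟩, ⟨hs, ht⟩, rfl⟩
    exact ⟨_, ⟨s, hs, rfl⟩, _, ⟨t, ht, rfl⟩, by simp⟩

lemma mixedArea_seg (u v : ℤ × ℤ) :
    mixedArea (seg u) (seg v) = |(u.1 : ℝ) * v.2 - u.2 * v.1| := by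
  have h1 : volume (seg u) = 0 := by
    rw [seg_eq_image, Measure.addHaar_image_linearMap, Measure.volume_eq_prod,
      Measure.prod_prod]
    simp
  have h2 : volume (seg v) = 0 := by
    rw [seg_eq_image, Measure.addHaar_image_linearMap, Measure.volume_eq_prod,
      Measure.prod_prod]
    simp
  have h3 : volume (seg u + seg v)
      = ENNReal.ofReal |(u.1 : ℝ) * v.2 - u.2 * v.1| := by
    rw [seg_add_eq_image, Measure.addHaar_image_linearMap, Measure.volume_eq_prod,
      Measure.prod_prod, shearMap_det]
    simp [latticeEmbed]
  rw [mixedArea, h1, h2, h3]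
  simp [ENNReal.toReal_ofReal (abs_nonneg _)]

lemma mixedArea_seg' (u v : ℤ × ℤ) (n : ℕ) (h : u.1 * v.2 - u.2 * v.1 = n ∨ u.1 * v.2 - u.2 * v.1 = -(n:ℤ)) :
    mixedArea (seg u) (seg v) = (n : ℝ) := by
  rw [mixedArea_seg]
  have e : (u.1 : ℝ) * v.2 - u.2 * v.1 = ((u.1 * v.2 - u.2 * v.1 : ℤ) : ℝ) := by push_cast; ring
  rcases h with h | h <;> rw [e, h] <;> simp [abs_of_nonneg]

/-- Any triple of non-negative integers arises as the triple of pairwise mixed areas of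
three lattice polytopes in ℝ². -/
theorem realizable_three (v₁₂ v₁₃ v₂₃ : ℕ) :
    ∃ P₁ P₂ P₃ : Set (ℝ × ℝ),
      IsLatticePolytope P₁ ∧ IsLatticePolytope P₂ ∧ IsLatticePolytope P₃ ∧
      mixedArea P₁ P₂ = (v₁₂ : ℝ) ∧ mixedArea P₁ P₃ = (v₁₃ : ℝ) ∧
      mixedArea P₂ P₃ = (v₂₃ : ℝ) := by
  rcases Nat.eq_zero_or_pos v₁₂ with h12 | h12
  · -- x = 0 case: u₁=(y,0), u₂=(z,0), u₃=(0,1)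
    subst h12
    exact ⟨seg (v₁₃, 0), seg (v₂₃, 0), seg (0, 1), seg_poly _, seg_poly _, seg_poly _,
      mixedArea_seg' _ _ 0 (by simp),
      mixedArea_seg' _ _ v₁₃ (by left; simp),
      mixedArea_seg' _ _ v₂₃ (by left; simp)⟩
  rcases Nat.eq_zero_or_pos v₁₃ with h13 | h13
  · subst h13
    exact ⟨seg (v₁₂, 0), seg (0, 1), seg (v₂₃, 0), seg_poly _, seg_poly _, seg_poly _,
      mixedArea_seg' _ _ v₁₂ (by left; simp),
      mixedArea_seg' _ _ 0 (by simp),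
      mixedArea_seg' _ _ v₂₃ (by right; simp)⟩
  -- main case: v₁₂, v₁₃ > 0
  set X : ℤ := (v₁₂ : ℤ) with hX
  set Y : ℤ := (v₁₃ : ℤ) with hY
  have hg : 0 < Int.gcd X Y := by
    rw [Int.gcd_pos_iff]; left; simp [hX]; omega
  set d : ℤ := (Int.gcd X Y : ℤ) with hd
  have hdX : d ∣ X := Int.gcd_dvd_left X Y
  have hdY : d ∣ Y := Int.gcd_dvd_right X Y
  set x' : ℤ := X / d with hx'
  set y' : ℤ := Y / d with hy'
  have hXx : X = d * x' := (Int.mul_ediv_cancel' hdX).symm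
  have hYy : Y = d * y' := (Int.mul_ediv_cancel' hdY).symm
  have hcop : IsCoprime x' y' := by
    rw [Int.isCoprime_iff_gcd_eq_one]
    exact Int.gcd_div_gcd_div_gcd hg
  obtain ⟨A, B, hAB⟩ := hcop
  -- q*y' - x'*r = z with q = z*B? hAB : A * x' + B * y' = 1
  refine ⟨seg (d, 0), seg ((v₂₃ : ℤ) * B, x'), seg (-((v₂₃ : ℤ) * A), y'),
    seg_poly _, seg_poly _, seg_poly _,
    mixedArea_seg' _ _ v₁₂ ?_, mixedArea_seg' _ _ v₁₃ ?_, mixedArea_seg' _ _ v₂₃ ?_⟩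
  · left; simp only; rw [hX] at hXx; linarith [hXx]
  · left; simp only; rw [hY] at hYy; linarith [hYy]
  · left; simp only; ring_nf; nlinarith [hAB]
end

section
/- Let P, Q be lattice polytopes in ℝ² and let u ∈ ℤ² be a primitive vector. Suppose w_u(P) and w_u(Q) are not both zero, and let d = gcd(w_u(P), w_u(Q)). Then either V(P,Q) = 0 or V(P,Q) ≥ min{ d, w_u(P)/d, w_u(Q)/d }. -/
open MeasureTheory Pointwise

/-- The (lattice) width of a set `K ⊆ ℝ²` in the direction `u ∈ ℤ²`. -/
noncomputable def latticeWidth (u : ℤ × ℤ) (K : Set (ℝ × ℝ)) : ℝ :=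
  sSup ((fun x : ℝ × ℝ => x.1 * u.1 + x.2 * u.2) '' K) -
    sInf ((fun x : ℝ × ℝ => x.1 * u.1 + x.2 * u.2) '' K)

namespace MAG

/-- determinant of two plane vectors -/
def detR (x y : ℝ × ℝ) : ℝ := x.1 * y.2 - x.2 * y.1

/-- slice of a plane set -/
def slc (S : Set (ℝ × ℝ)) (x : ℝ) : Set ℝ := {y | (x, y) ∈ S}

lemma volume_eq_lintegral_slc {S : Set (ℝ × ℝ)} (hS : MeasurableSet S) :
    volume S = ∫⁻ x, volume (slc S x) := by
  rw [MeasureTheory.Measure.volume_eq_prod, Measure.prod_apply hS]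
  rfl

lemma measurable_slc {S : Set (ℝ × ℝ)} (hS : MeasurableSet S) :
    Measurable fun x => volume (slc S x) :=
  measurable_measure_prodMk_left hS

lemma volume_convex_real {A : Set ℝ} (hA : Convex ℝ A) (hb : Bornology.IsBounded A)
    (hne : A.Nonempty) : volume A = ENNReal.ofReal (sSup A - sInf A) := by
  have hba := hb.bddAbove
  have hbb := hb.bddBelow
  have h1 : Set.Ioo (sInf A) (sSup A) ⊆ A := by
    intro x hx
    obtain ⟨a, ha, hax⟩ := exists_lt_of_csInf_lt hne hx.1
    obtain ⟨b, hbA, hxb⟩ := exists_lt_of_lt_csSup hne hx.2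
    exact hA.ordConnected.out ha hbA ⟨hax.le, hxb.le⟩
  have h2 : A ⊆ Set.Icc (sInf A) (sSup A) := fun a ha => ⟨csInf_le hbb ha, le_csSup hba ha⟩
  have hm1 : volume (Set.Ioo (sInf A) (sSup A)) ≤ volume A := measure_mono h1
  have hm2 : volume A ≤ volume (Set.Icc (sInf A) (sSup A)) := measure_mono h2
  rw [Real.volume_Ioo] at hm1
  rw [Real.volume_Icc] at hm2
  exact le_antisymm hm2 hm1

lemma slc_convex {S : Set (ℝ × ℝ)} (hS : Convex ℝ S) (x : ℝ) : Convex ℝ (slc S x) := by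
  intro y hy z hz a b ha hb hab
  have h := hS hy hz ha hb hab
  simp only [Prod.smul_mk, Prod.mk_add_mk, smul_eq_mul] at h
  have hx : a * x + b * x = x := by rw [← add_mul, hab, one_mul]
  rw [hx] at h
  exact h

lemma slc_bounded {S : Set (ℝ × ℝ)} (hS : IsCompact S) (x : ℝ) :
    Bornology.IsBounded (slc S x) := by
  have h : slc S x ⊆ Prod.snd '' S := fun y hy => ⟨(x, y), hy, rfl⟩
  exact ((hS.image continuous_snd).isBounded).subset h

lemma proj_eq_Icc {P : Set (ℝ × ℝ)} (hk : IsCompact P) (hc : Convex ℝ P) (hne : P.Nonempty) :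
    Prod.fst '' P = Set.Icc (sInf (Prod.fst '' P)) (sSup (Prod.fst '' P)) := by
  have hAk : IsCompact (Prod.fst '' P) := hk.image continuous_fst
  have hAc : Convex ℝ (Prod.fst '' P) := hc.linear_image (LinearMap.fst ℝ ℝ ℝ)
  have hAne : (Prod.fst '' P).Nonempty := hne.image _
  apply Set.Subset.antisymm
  · exact fun a ha => ⟨csInf_le hAk.bddBelow ha, le_csSup hAk.bddAbove ha⟩
  · exact hAc.ordConnected.out (hAk.sInf_mem hAne) (hAk.sSup_mem hAne)

lemma lintegral_interval_shift (G : ℝ → ENNReal) (c : ℝ) {A A' : Set ℝ} (hA' : MeasurableSet A')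
    (h : ∀ x, x ∈ A ↔ x - c ∈ A') :
    ∫⁻ x in A, G (x - c) = ∫⁻ x in A', G x := by
  have hAeq : A = (· - c) ⁻¹' A' := by ext x; exact h x
  have hAm : MeasurableSet A := by rw [hAeq]; exact (measurable_sub_const c) hA'
  rw [← lintegral_indicator hAm, ← lintegral_indicator hA']
  rw [← lintegral_add_right_eq_self (Set.indicator A' G) (-c)]
  congr 1
  ext x
  rw [← sub_eq_add_neg]
  by_cases hx : x ∈ A
  · rw [Set.indicator_of_mem hx, Set.indicator_of_mem ((h x).1 hx)]
  · rw [Set.indicator_of_notMem hx, Set.indicator_of_notMem (fun hh => hx ((h x).2 hh))]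


lemma vert_key {P Q : Set (ℝ × ℝ)} (hPc : Convex ℝ P) (hPk : IsCompact P)
    (hQc : Convex ℝ Q) (hQk : IsCompact Q)
    {p p' : ℝ × ℝ} (hp : p ∈ P) (hp' : p' ∈ P)
    {q : ℝ × ℝ} {β : ℝ} (hq : q ∈ Q) (hq' : (q.1, q.2 + β) ∈ Q) (hβ : 0 ≤ β) :
    volume P + volume Q + ENNReal.ofReal (|p'.1 - p.1| * β) ≤ volume (P + Q) := by
  have hPne : P.Nonempty := ⟨p, hp⟩
  have hQne : Q.Nonempty := ⟨q, hq⟩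
  set mP := sInf (Prod.fst '' P) with hmP
  set MP := sSup (Prod.fst '' P) with hMP
  set mQ := sInf (Prod.fst '' Q) with hmQ
  set MQ := sSup (Prod.fst '' Q) with hMQ
  have hprojP : Prod.fst '' P = Set.Icc mP MP := proj_eq_Icc hPk hPc hPne
  have hprojQ : Prod.fst '' Q = Set.Icc mQ MQ := proj_eq_Icc hQk hQc hQne
  have hmemP : ∀ z ∈ P, z.1 ∈ Set.Icc mP MP := fun z hz => hprojP ▸ ⟨z, hz, rfl⟩
  have hmemQ : ∀ z ∈ Q, z.1 ∈ Set.Icc mQ MQ := fun z hz => hprojQ ▸ ⟨z, hz, rfl⟩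
  have hp1 := hmemP p hp
  have hp'1 := hmemP p' hp'
  have hq1 := hmemQ q hq
  have hmPMP : mP ≤ MP := le_trans hp1.1 hp1.2
  have hmQMQ : mQ ≤ MQ := le_trans hq1.1 hq1.2
  have hPQk : IsCompact (P + Q) := hPk.add hQk
  have hPQc : Convex ℝ (P + Q) := hPc.add hQc
  have hPm : MeasurableSet P := hPk.isClosed.measurableSet
  have hQm : MeasurableSet Q := hQk.isClosed.measurableSet
  have hPQm : MeasurableSet (P + Q) := hPQk.isClosed.measurableSet
  set F : ℝ → ENNReal := fun x => volume (slc P x) with hF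
  set G : ℝ → ENNReal := fun x => volume (slc Q x) with hG
  set H : ℝ → ENNReal := fun x => volume (slc (P + Q) x) with hH
  have hHm : Measurable H := measurable_slc hPQm
  have hGm : Measurable G := measurable_slc hQm
  have hFm : Measurable F := measurable_slc hPm
  -- slices of P at the extreme abscissae are nonempty
  have hslP : ∀ x ∈ Set.Icc mP MP, (slc P x).Nonempty := by
    intro x hx
    have : x ∈ Prod.fst '' P := hprojP ▸ hx
    obtain ⟨z, hz, hz1⟩ := this
    exact ⟨z.2, by simpa [slc, hz1] using (show ((x, z.2) : ℝ × ℝ) ∈ P by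
      rw [show ((x, z.2) : ℝ × ℝ) = z from by rw [← hz1]]; exact hz)⟩
  -- bound (1): for all x, G (x - mP) ≤ H x ; similarly with MP.
  have bound_side : ∀ t ∈ Set.Icc mP MP, ∀ x, G (x - t) ≤ H x := by
    intro t ht x
    obtain ⟨y0, hy0⟩ := hslP t ht
    have hsub : slc Q (x - t) ⊆ (fun y => y0 + y) ⁻¹' slc (P + Q) x := by
      intro y hy
      have : ((t, y0) : ℝ × ℝ) + (x - t, y) ∈ P + Q := Set.add_mem_add hy0 hy
      simpa [slc, Prod.mk_add_mk, show t + (x - t) = x from by ring] using this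
    calc G (x - t) ≤ volume ((fun y => y0 + y) ⁻¹' slc (P + Q) x) := measure_mono hsub
      _ = H x := measure_preimage_add volume y0 _
  -- bound (2)
  have bound_mid : ∀ x ∈ Set.Icc (mP + q.1) (MP + q.1), F (x - q.1) + ENNReal.ofReal β ≤ H x := by
    intro x hx
    set A := slc P (x - q.1) with hA
    have hxm : x - q.1 ∈ Set.Icc mP MP := ⟨by linarith [hx.1], by linarith [hx.2]⟩
    have hAne : A.Nonempty := hslP _ hxm
    have hAc : Convex ℝ A := slc_convex hPc _
    have hAb : Bornology.IsBounded A := slc_bounded hPk _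
    set C := slc (P + Q) x with hC
    have hCc : Convex ℝ C := slc_convex hPQc _
    have hCb : Bornology.IsBounded C := slc_bounded hPQk _
    have hmem1 : ∀ a ∈ A, a + q.2 ∈ C := by
      intro a ha
      have h0 : ((x - q.1, a) : ℝ × ℝ) + q ∈ P + Q := Set.add_mem_add ha hq
      have heq : ((x - q.1, a) : ℝ × ℝ) + q = (x, a + q.2) := by
        rw [Prod.ext_iff]; constructor <;> simp <;> ring
      rw [heq] at h0
      exact h0
    have hmem2 : ∀ a ∈ A, a + (q.2 + β) ∈ C := by
      intro a ha
      have : ((x - q.1, a) : ℝ × ℝ) + (q.1, q.2 + β) ∈ P + Q := Set.add_mem_add ha hq'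
      exact (by simpa [slc, Prod.mk_add_mk, show x - q.1 + q.1 = x from by ring, add_assoc] using this : (x, a + (q.2 + β)) ∈ P + Q)
    have hCne : C.Nonempty := ⟨hAne.choose + q.2, hmem1 _ hAne.choose_spec⟩
    have hsup : sSup A + (q.2 + β) ≤ sSup C := by
      have h1 : sSup A ≤ sSup C - (q.2 + β) := csSup_le hAne fun a ha => by
        have := le_csSup hCb.bddAbove (hmem2 a ha); linarith
      linarith
    have hinf : sInf C ≤ sInf A + q.2 := by
      have h1 : sInf C - q.2 ≤ sInf A := le_csInf hAne fun a ha => by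
        have := csInf_le hCb.bddBelow (hmem1 a ha); linarith
      linarith
    have hAin : sInf A ≤ sSup A := csInf_le_csSup hAne hAb.bddBelow hAb.bddAbove
    have hvolA : volume A = ENNReal.ofReal (sSup A - sInf A) := volume_convex_real hAc hAb hAne
    have hvolC : volume C = ENNReal.ofReal (sSup C - sInf C) := volume_convex_real hCc hCb hCne
    show F (x - q.1) + ENNReal.ofReal β ≤ H x
    have : F (x - q.1) = volume A := rfl
    rw [this, hvolA]
    have : H x = volume C := rfl
    rw [this, hvolC]
    rw [← ENNReal.ofReal_add (by linarith) hβ]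
    exact ENNReal.ofReal_le_ofReal (by linarith)
  -- the three intervals
  set sA := Set.Ico (mP + mQ) (mP + q.1) with hsA
  set sB := Set.Icc (mP + q.1) (MP + q.1) with hsB
  set sC := Set.Ioc (MP + q.1) (MP + MQ) with hsC
  have hdAB : Disjoint sA sB := by
    rw [Set.disjoint_left]; intro x hxA hxB; exact absurd hxB.1 (not_le.2 hxA.2)
  have hdABC : Disjoint (sA ∪ sB) sC := by
    rw [Set.disjoint_left]; intro x hxAB hxC
    rcases hxAB with hxA | hxB
    · exact absurd hxC.1 (not_lt.2 (by linarith [hxA.2]))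
    · exact absurd hxC.1 (not_lt.2 hxB.2)
  have hmA : MeasurableSet sA := measurableSet_Ico
  have hmB : MeasurableSet sB := measurableSet_Icc
  have hmC : MeasurableSet sC := measurableSet_Ioc
  -- splitting
  have hsplit : ((∫⁻ x in sA, H x) + ∫⁻ x in sB, H x) + ∫⁻ x in sC, H x ≤ ∫⁻ x, H x := by
    rw [← lintegral_union hmB hdAB, ← lintegral_union hmC hdABC]
    exact setLIntegral_le_lintegral _ _
  -- piece A
  have hA1 : ∫⁻ x in Set.Ico mQ q.1, G x ≤ ∫⁻ x in sA, H x := by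
    rw [← lintegral_interval_shift G mP (A := sA) (A' := Set.Ico mQ q.1) measurableSet_Ico
      (fun x => by
        simp only [hsA, Set.mem_Ico]
        constructor
        · rintro ⟨h1, h2⟩; exact ⟨by linarith, by linarith⟩
        · rintro ⟨h1, h2⟩; exact ⟨by linarith, by linarith⟩)]
    exact setLIntegral_mono hHm fun x _ => bound_side mP ⟨le_refl _, hmPMP⟩ x
  -- piece C
  have hC1 : ∫⁻ x in Set.Ioc q.1 MQ, G x ≤ ∫⁻ x in sC, H x := by
    rw [← lintegral_interval_shift G MP (A := sC) (A' := Set.Ioc q.1 MQ) measurableSet_Ioc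
      (fun x => by
        simp only [hsC, Set.mem_Ioc]
        constructor
        · rintro ⟨h1, h2⟩; exact ⟨by linarith, by linarith⟩
        · rintro ⟨h1, h2⟩; exact ⟨by linarith, by linarith⟩)]
    exact setLIntegral_mono hHm fun x _ => bound_side MP ⟨hmPMP, le_refl _⟩ x
  -- piece B
  have hB1 : volume P + ENNReal.ofReal β * volume sB ≤ ∫⁻ x in sB, H x := by
    have step : ∫⁻ x in sB, (F (x - q.1) + ENNReal.ofReal β) ≤ ∫⁻ x in sB, H x :=
      setLIntegral_mono hHm fun x hx => bound_mid x hx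
    have hFs : Measurable fun x => F (x - q.1) := hFm.comp (measurable_sub_const q.1)
    have expand : ∫⁻ x in sB, (F (x - q.1) + ENNReal.ofReal β)
        = (∫⁻ x in sB, F (x - q.1)) + ENNReal.ofReal β * volume sB := by
      rw [lintegral_add_left hFs, setLIntegral_const]
    have shiftB : ∫⁻ x in sB, F (x - q.1) = ∫⁻ x in Set.Icc mP MP, F x :=
      lintegral_interval_shift F q.1 measurableSet_Icc
        (fun x => by
          simp only [hsB, Set.mem_Icc]
          constructor
          · rintro ⟨h1, h2⟩; exact ⟨by linarith, by linarith⟩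
          · rintro ⟨h1, h2⟩; exact ⟨by linarith, by linarith⟩)
    have hFull : ∫⁻ x in Set.Icc mP MP, F x = volume P := by
      rw [volume_eq_lintegral_slc hPm]
      rw [← lintegral_indicator measurableSet_Icc]
      congr 1
      ext x
      by_cases hx : x ∈ Set.Icc mP MP
      · rw [Set.indicator_of_mem hx]
      · rw [Set.indicator_of_notMem hx]
        have hemp : slc P x = ∅ := by
          ext y; simp only [slc, Set.mem_setOf_eq, Set.mem_empty_iff_false, iff_false]
          intro hy; exact hx (hmemP _ hy)
        show (0 : ENNReal) = volume (slc P x)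
        rw [hemp]; simp
    calc volume P + ENNReal.ofReal β * volume sB
        = ∫⁻ x in sB, (F (x - q.1) + ENNReal.ofReal β) := by rw [expand, shiftB, hFull]
      _ ≤ ∫⁻ x in sB, H x := step
  -- volume Q ≤ piece A target + piece C target
  have hQsplit : volume Q ≤ (∫⁻ x in Set.Ico mQ q.1, G x) + ∫⁻ x in Set.Ioc q.1 MQ, G x := by
    have hFullQ : volume Q = ∫⁻ x in Set.Icc mQ MQ, G x := by
      rw [volume_eq_lintegral_slc hQm, ← lintegral_indicator measurableSet_Icc]
      congr 1
      ext x
      by_cases hx : x ∈ Set.Icc mQ MQ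
      · rw [Set.indicator_of_mem hx]
      · rw [Set.indicator_of_notMem hx]
        have hemp : slc Q x = ∅ := by
          ext y; simp only [slc, Set.mem_setOf_eq, Set.mem_empty_iff_false, iff_false]
          intro hy; exact hx (hmemQ _ hy)
        show volume (slc Q x) = (0 : ENNReal)
        rw [hemp]; simp
    rw [hFullQ]
    have hsubset : Set.Icc mQ MQ ⊆ Set.Ico mQ q.1 ∪ Set.Icc q.1 MQ := by
      intro x hx
      by_cases h : x < q.1
      · exact Or.inl ⟨hx.1, h⟩
      · exact Or.inr ⟨not_lt.1 h, hx.2⟩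
    calc ∫⁻ x in Set.Icc mQ MQ, G x
        ≤ ∫⁻ x in Set.Ico mQ q.1 ∪ Set.Icc q.1 MQ, G x := lintegral_mono_set hsubset
      _ ≤ (∫⁻ x in Set.Ico mQ q.1, G x) + ∫⁻ x in Set.Icc q.1 MQ, G x := lintegral_union_le _ _ _
      _ ≤ (∫⁻ x in Set.Ico mQ q.1, G x) + ∫⁻ x in Set.Ioc q.1 MQ, G x := by
          refine add_le_add le_rfl ?_
          have hsub2 : Set.Icc q.1 MQ ⊆ {q.1} ∪ Set.Ioc q.1 MQ := by
            intro x hx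
            rcases eq_or_lt_of_le hx.1 with h | h
            · exact Or.inl (by simp [← h])
            · exact Or.inr ⟨h, hx.2⟩
          calc ∫⁻ x in Set.Icc q.1 MQ, G x ≤ ∫⁻ x in {q.1} ∪ Set.Ioc q.1 MQ, G x :=
                lintegral_mono_set hsub2
            _ ≤ (∫⁻ x in {q.1}, G x) + ∫⁻ x in Set.Ioc q.1 MQ, G x := lintegral_union_le _ _ _
            _ = ∫⁻ x in Set.Ioc q.1 MQ, G x := by
                rw [setLIntegral_measure_zero _ _ Real.volume_singleton, zero_add]
  -- the determinant term
  have hdet : ENNReal.ofReal (|p'.1 - p.1| * β) ≤ ENNReal.ofReal β * volume sB := by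
    have hv : volume sB = ENNReal.ofReal (MP + q.1 - (mP + q.1)) := Real.volume_Icc
    have habs : |p'.1 - p.1| ≤ MP - mP := by
      rw [abs_le]; constructor <;> linarith [hp1.1, hp1.2, hp'1.1, hp'1.2]
    rw [hv, show MP + q.1 - (mP + q.1) = MP - mP from by ring, ← ENNReal.ofReal_mul hβ]
    refine ENNReal.ofReal_le_ofReal ?_
    calc |p'.1 - p.1| * β ≤ (MP - mP) * β := mul_le_mul_of_nonneg_right habs hβ
      _ = β * (MP - mP) := mul_comm _ _
  -- assemble
  rw [volume_eq_lintegral_slc hPQm]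
  calc volume P + volume Q + ENNReal.ofReal (|p'.1 - p.1| * β)
      ≤ volume P + ((∫⁻ x in Set.Ico mQ q.1, G x) + ∫⁻ x in Set.Ioc q.1 MQ, G x)
          + ENNReal.ofReal β * volume sB :=
        add_le_add (add_le_add le_rfl hQsplit) hdet
    _ = (((∫⁻ x in Set.Ico mQ q.1, G x) + (volume P + ENNReal.ofReal β * volume sB))
          + ∫⁻ x in Set.Ioc q.1 MQ, G x) := by ring
    _ ≤ ((∫⁻ x in sA, H x) + ∫⁻ x in sB, H x) + ∫⁻ x in sC, H x :=
        add_le_add (add_le_add hA1 hB1) hC1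
    _ ≤ ∫⁻ x, H x := hsplit

lemma key {P Q : Set (ℝ × ℝ)} (hPc : Convex ℝ P) (hPk : IsCompact P)
    (hQc : Convex ℝ Q) (hQk : IsCompact Q)
    {p p' q q' : ℝ × ℝ} (hp : p ∈ P) (hp' : p' ∈ P) (hq : q ∈ Q) (hq' : q' ∈ Q) :
    volume P + volume Q + ENNReal.ofReal |detR (p' - p) (q' - q)| ≤ volume (P + Q) := by
  by_cases hb : q' - q = 0
  · have hd0 : detR (p' - p) (q' - q) = 0 := by rw [hb]; simp [detR]
    rw [hd0]
    have h := vert_key hPc hPk hQc hQk hp hp' (q := q) (β := 0) hq (by simpa using hq) le_rfl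
    simpa using h
  · set b := q' - q with hbdef
    have hbb : b.1 ^ 2 + b.2 ^ 2 > 0 := by
      rcases Prod.mk.injEq .. ▸ (fun h : b.1 = 0 ∧ b.2 = 0 => hb (Prod.ext h.1 h.2)) with _
      by_contra hcon
      push_neg at hcon
      have h1 : b.1 = 0 := by nlinarith [sq_nonneg b.1, sq_nonneg b.2]
      have h2 : b.2 = 0 := by nlinarith [sq_nonneg b.1, sq_nonneg b.2]
      exact hb (Prod.ext h1 h2)
    set r := Real.sqrt (b.1 ^ 2 + b.2 ^ 2) with hrdef
    have hr : 0 < r := Real.sqrt_pos.2 hbb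
    have hr2 : r ^ 2 = b.1 ^ 2 + b.2 ^ 2 := Real.sq_sqrt hbb.le
    set c := b.2 / r with hcdef
    set s := -b.1 / r with hsdef
    have hcs : c ^ 2 + s ^ 2 = 1 := by
      rw [hcdef, hsdef, div_pow, div_pow, neg_sq, ← add_div, add_comm, ← hr2]
      exact div_self (pow_ne_zero 2 hr.ne')
    set T := Matrix.toLin (Module.Basis.finTwoProd ℝ) (Module.Basis.finTwoProd ℝ) !![c, s; -s, c] with hTdef
    have hTapp : ∀ v : ℝ × ℝ, T v = (c * v.1 + s * v.2, -s * v.1 + c * v.2) := fun v =>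
      Matrix.toLin_finTwoProd_apply c s (-s) c v
    have hdetT : LinearMap.det T = 1 := by
      rw [hTdef, LinearMap.det_toLin, Matrix.det_fin_two_of]
      nlinarith [hcs]
    have hvol : ∀ S : Set (ℝ × ℝ), volume (T '' S) = volume S := fun S => by
      rw [Measure.addHaar_image_linearMap, hdetT]
      simp
    have hTcont : Continuous T := T.continuous_of_finiteDimensional
    have hTb : T b = (0, r) := by
      rw [hTapp]
      have h1 : c * b.1 + s * b.2 = 0 := by
        rw [hcdef, hsdef]; field_simp; ring
      have h2 : -s * b.1 + c * b.2 = r := by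
        rw [hcdef, hsdef]; field_simp; nlinarith [hr2]
      rw [h1, h2]
    have hmem : (T q |>.1, (T q).2 + r) ∈ T '' Q := by
      have : T q + (0, r) = ((T q).1, (T q).2 + r) := by
        rw [Prod.ext_iff]; constructor <;> simp
      rw [← this, ← hTb, ← map_add]
      exact ⟨q + b, by simpa [hbdef] using hq', rfl⟩
    have main := vert_key (hPc.linear_image T) (hPk.image hTcont)
      (hQc.linear_image T) (hQk.image hTcont)
      (p := T p) (p' := T p') ⟨p, hp, rfl⟩ ⟨p', hp', rfl⟩
      (q := T q) (β := r) ⟨q, hq, rfl⟩ hmem hr.le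
    rw [hvol P, hvol Q, ← Set.image_add T, hvol (P + Q)] at main
    have hTfst : (T p').1 - (T p).1 = detR (p' - p) b / r := by
      rw [hTapp, hTapp]
      simp only [detR, hcdef, hsdef]
      have : (p' - p).1 = p'.1 - p.1 := rfl
      field_simp
      rw [this, show (p' - p).2 = p'.2 - p.2 from rfl]; ring
    have habs : |(T p').1 - (T p).1| * r = |detR (p' - p) b| := by
      rw [hTfst, abs_div, abs_of_pos hr, div_mul_cancel₀ _ hr.ne']
    rw [habs] at main
    exact main

lemma key' {P Q : Set (ℝ × ℝ)} (hPc : Convex ℝ P) (hPk : IsCompact P)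
    (hQc : Convex ℝ Q) (hQk : IsCompact Q)
    {p p' q q' : ℝ × ℝ} (hp : p ∈ P) (hp' : p' ∈ P) (hq : q ∈ Q) (hq' : q' ∈ Q) :
    (volume P).toReal + (volume Q).toReal + |detR (p' - p) (q' - q)|
      ≤ (volume (P + Q)).toReal := by
  have h := key hPc hPk hQc hQk hp hp' hq hq'
  have hPf : volume P ≠ ⊤ := hPk.measure_lt_top.ne
  have hQf : volume Q ≠ ⊤ := hQk.measure_lt_top.ne
  have hPQf : volume (P + Q) ≠ ⊤ := (hPk.add hQk).measure_lt_top.ne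
  have h2 := ENNReal.toReal_mono hPQf h
  rwa [ENNReal.toReal_add (by finiteness) ENNReal.ofReal_ne_top,
    ENNReal.toReal_add hPf hQf, ENNReal.toReal_ofReal (abs_nonneg _)] at h2

def detZ (x y : ℤ × ℤ) : ℤ := x.1 * y.2 - x.2 * y.1
def lz (u s : ℤ × ℤ) : ℤ := s.1 * u.1 + s.2 * u.2

lemma detR_embed_sub (p p' q q' : ℤ × ℤ) :
    detR (latticeEmbed p' - latticeEmbed p) (latticeEmbed q' - latticeEmbed q)
      = ((detZ (p' - p) (q' - q) : ℤ) : ℝ) := by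
  simp only [detR, detZ, latticeEmbed, Prod.fst_sub, Prod.snd_sub, Prod.fst_sub, Prod.snd_sub]
  push_cast
  ring

lemma detR_embed_sub1 (p p' c : ℤ × ℤ) :
    detR (latticeEmbed p' - latticeEmbed p) (latticeEmbed c)
      = ((detZ (p' - p) c : ℤ) : ℝ) := by
  simp only [detR, detZ, latticeEmbed, Prod.fst_sub, Prod.snd_sub]
  push_cast
  ring

lemma width_eq (S : Finset (ℤ × ℤ)) (hS : S.Nonempty) (u : ℤ × ℤ) :
    ∃ p ∈ S, ∃ p' ∈ S,
      (∀ s ∈ S, lz u p ≤ lz u s ∧ lz u s ≤ lz u p') ∧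
      latticeWidth u (convexHull ℝ (latticeEmbed '' (S : Set (ℤ × ℤ))))
        = ((lz u p' - lz u p : ℤ) : ℝ) := by
  obtain ⟨p, hp, hpmin⟩ := S.exists_min_image (lz u) hS
  obtain ⟨p', hp', hpmax⟩ := S.exists_max_image (lz u) hS
  refine ⟨p, hp, p', hp', fun s hs => ⟨hpmin s hs, hpmax s hs⟩, ?_⟩
  set g : (ℝ × ℝ) → ℝ := fun x => x.1 * u.1 + x.2 * u.2 with hg
  have hlin : IsLinearMap ℝ g := by
    constructor
    · intro x y; simp only [hg, Prod.fst_add, Prod.snd_add]; ring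
    · intro c x
      show (c • x).1 * (u.1 : ℝ) + (c • x).2 * (u.2 : ℝ) = c • (x.1 * (u.1 : ℝ) + x.2 * (u.2 : ℝ))
      simp only [Prod.smul_fst, Prod.smul_snd, smul_eq_mul]
      ring
  set P := convexHull ℝ (latticeEmbed '' (S : Set (ℤ × ℤ))) with hP
  have himg : g '' P = convexHull ℝ (g '' (latticeEmbed '' (S : Set (ℤ × ℤ)))) := by
    have := (hlin.mk' g).image_convexHull (latticeEmbed '' (S : Set (ℤ × ℤ)))
    exact this
  have hge : ∀ s : ℤ × ℤ, g (latticeEmbed s) = ((lz u s : ℤ) : ℝ) := by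
    intro s; simp only [hg, latticeEmbed, lz]; push_cast; ring
  have hGreat : IsGreatest (g '' P) ((lz u p' : ℤ) : ℝ) := by
    constructor
    · exact ⟨latticeEmbed p', subset_convexHull ℝ _ ⟨p', hp', rfl⟩, hge p'⟩
    · intro y hy
      rw [himg] at hy
      have hsub : convexHull ℝ (g '' (latticeEmbed '' (S : Set (ℤ × ℤ)))) ⊆
          Set.Iic ((lz u p' : ℤ) : ℝ) := by
        apply convexHull_min _ (convex_Iic _)
        rintro _ ⟨_, ⟨s, hs, rfl⟩, rfl⟩
        rw [hge s]
        simp only [Set.mem_Iic]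
        exact_mod_cast hpmax s hs
      exact hsub hy
  have hLeast : IsLeast (g '' P) ((lz u p : ℤ) : ℝ) := by
    constructor
    · exact ⟨latticeEmbed p, subset_convexHull ℝ _ ⟨p, hp, rfl⟩, hge p⟩
    · intro y hy
      rw [himg] at hy
      have hsub : convexHull ℝ (g '' (latticeEmbed '' (S : Set (ℤ × ℤ)))) ⊆
          Set.Ici ((lz u p : ℤ) : ℝ) := by
        apply convexHull_min _ (convex_Ici _)
        rintro _ ⟨_, ⟨s, hs, rfl⟩, rfl⟩
        rw [hge s]
        simp only [Set.mem_Ici]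
        exact_mod_cast hpmin s hs
      exact hsub hy
  show sSup (g '' P) - sInf (g '' P) = _
  rw [hGreat.csSup_eq, hLeast.csInf_eq]
  push_cast
  ring

lemma decomp {u : ℤ × ℤ} {v1 v2 : ℤ} (hv : u.1 * v1 + u.2 * v2 = 1) (a : ℤ × ℤ) :
    ∃ α : ℤ, a = (lz u a) • (v1, v2) + α • (-u.2, u.1) := by
  set w := lz u a with hw
  set c1 := a.1 - w * v1 with hc1
  set c2 := a.2 - w * v2 with hc2
  have hc : c1 * u.1 + c2 * u.2 = 0 := by
    simp only [hc1, hc2, hw, lz]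
    linear_combination (-(a.1 * u.1) - a.2 * u.2) * hv
  refine ⟨v1 * c2 - v2 * c1, ?_⟩
  have h1 : c1 = (v1 * c2 - v2 * c1) * (-u.2) := by linear_combination v1 * hc + (-c1) * hv
  have h2 : c2 = (v1 * c2 - v2 * c1) * u.1 := by linear_combination v2 * hc + (-c2) * hv
  rw [Prod.ext_iff]
  constructor
  · simp only [Prod.fst_add, Prod.smul_fst, smul_eq_mul]
    linarith [h1]
  · simp only [Prod.snd_add, Prod.smul_snd, smul_eq_mul]
    linarith [h2]

lemma detR_zero_mem_span {x c : ℝ × ℝ} (hc : c ≠ 0) (h : detR x c = 0) :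
    ∃ t : ℝ, x = t • c := by
  by_cases h1 : c.1 = 0
  · have h2 : c.2 ≠ 0 := fun h2 => hc (Prod.ext h1 h2)
    have hx1 : x.1 = 0 := by
      have := h
      simp only [detR, h1, mul_zero, sub_zero] at this
      exact (mul_eq_zero.1 this).resolve_right h2
    exact ⟨x.2 / c.2, by
      rw [Prod.ext_iff]
      constructor
      · simp [Prod.smul_fst, h1, hx1]
      · simp [Prod.smul_snd]
        field_simp⟩
  · refine ⟨x.1 / c.1, ?_⟩
    rw [Prod.ext_iff]
    constructor
    · simp only [Prod.smul_fst, smul_eq_mul]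
      field_simp
    · simp only [Prod.smul_snd, smul_eq_mul]
      have : x.1 * c.2 = x.2 * c.1 := by simp only [detR] at h; linarith
      field_simp
      linarith [this]

lemma vol_line_zero {P : Set (ℝ × ℝ)} {p c : ℝ × ℝ} (hc : c ≠ 0)
    (h : ∀ x ∈ P, ∃ t : ℝ, x = p + t • c) : volume P = 0 := by
  have hsub : P ⊆ p +ᵥ (Submodule.span ℝ {c} : Set (ℝ × ℝ)) := by
    intro x hx
    obtain ⟨t, ht⟩ := h x hx
    exact ⟨t • c, Submodule.mem_span_singleton.2 ⟨t, rfl⟩, by show p + t • c = x; rw [ht]⟩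
  have htop : Submodule.span ℝ ({c} : Set (ℝ × ℝ)) ≠ ⊤ := by
    intro htop
    have hmem : ((-c.2, c.1) : ℝ × ℝ) ∈ Submodule.span ℝ ({c} : Set (ℝ × ℝ)) := by
      rw [htop]; trivial
    obtain ⟨t, ht⟩ := Submodule.mem_span_singleton.1 hmem
    have h1 : t * c.1 = -c.2 := congrArg Prod.fst ht
    have h2 : t * c.2 = c.1 := congrArg Prod.snd ht
    have : c.1 ^ 2 + c.2 ^ 2 = 0 := by linear_combination c.2 * h1 - c.1 * h2
    have hc1 : c.1 = 0 := by nlinarith [sq_nonneg c.1, sq_nonneg c.2]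
    have hc2 : c.2 = 0 := by nlinarith [sq_nonneg c.1, sq_nonneg c.2]
    exact hc (Prod.ext hc1 hc2)
  have hle : volume P ≤ 0 :=
    calc volume P ≤ volume (p +ᵥ (Submodule.span ℝ {c} : Set (ℝ × ℝ))) := measure_mono hsub
      _ = volume (Submodule.span ℝ {c} : Set (ℝ × ℝ)) := measure_vadd volume p _
      _ = 0 := Measure.addHaar_submodule volume _ htop
  exact le_antisymm hle zero_le

lemma line_convex (p c : ℝ × ℝ) : Convex ℝ {x : ℝ × ℝ | ∃ t : ℝ, x = p + t • c} := by
  intro x hx y hy s r hs hr hsr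
  obtain ⟨tx, rfl⟩ := hx
  obtain ⟨ty, rfl⟩ := hy
  refine ⟨s * tx + r * ty, ?_⟩
  have heq : s • (p + tx • c) + r • (p + ty • c) = (s + r) • p + (s * tx + r * ty) • c := by
    module
  rw [heq, hsr, one_smul]

end MAG

open MAG in
set_option maxHeartbeats 2000000 in
/-- Gap in the discrete diagram: if the lattice widths of `P, Q` in a primitive direction `u`
are `w₁, w₂` (not both zero) with `d = gcd(w₁,w₂)`, then either `V(P,Q) = 0` or
`V(P,Q) ≥ min{d, w₁/d, w₂/d}`. -/
theorem mixedArea_gap (P Q : Set (ℝ × ℝ))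
    (hP : IsLatticePolytope P) (hQ : IsLatticePolytope Q)
    (u : ℤ × ℤ) (hu : Int.gcd u.1 u.2 = 1)
    (w₁ w₂ : ℕ) (hw₁ : latticeWidth u P = (w₁ : ℝ)) (hw₂ : latticeWidth u Q = (w₂ : ℝ))
    (hne : ¬(w₁ = 0 ∧ w₂ = 0)) :
    mixedArea P Q = 0 ∨
      min ((Nat.gcd w₁ w₂ : ℝ))
        (min ((w₁ : ℝ) / (Nat.gcd w₁ w₂ : ℝ)) ((w₂ : ℝ) / (Nat.gcd w₁ w₂ : ℝ)))
        ≤ mixedArea P Q := by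
  obtain ⟨S, hSne, hPdef⟩ := hP
  obtain ⟨T, hTne, hQdef⟩ := hQ
  have hPc : Convex ℝ P := by rw [hPdef]; exact convex_convexHull ℝ _
  have hQc : Convex ℝ Q := by rw [hQdef]; exact convex_convexHull ℝ _
  have hPk : IsCompact P := by
    rw [hPdef]; exact (S.finite_toSet.image latticeEmbed).isCompact_convexHull ℝ
  have hQk : IsCompact Q := by
    rw [hQdef]; exact (T.finite_toSet.image latticeEmbed).isCompact_convexHull ℝ
  have hmemP : ∀ s ∈ S, latticeEmbed s ∈ P := fun s hs => by
    rw [hPdef]; exact subset_convexHull ℝ _ ⟨s, hs, rfl⟩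
  have hmemQ : ∀ s ∈ T, latticeEmbed s ∈ Q := fun s hs => by
    rw [hQdef]; exact subset_convexHull ℝ _ ⟨s, hs, rfl⟩
  obtain ⟨pm, hpm, pM, hpM, hpb, hwidthP⟩ := MAG.width_eq S hSne u
  obtain ⟨qm, hqm, qM, hqM, hqb, hwidthQ⟩ := MAG.width_eq T hTne u
  have hw1' : lz u pM - lz u pm = (w₁ : ℤ) := by
    rw [← hPdef] at hwidthP
    rw [hw₁] at hwidthP
    exact_mod_cast hwidthP.symm
  have hw2' : lz u qM - lz u qm = (w₂ : ℤ) := by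
    rw [← hQdef] at hwidthQ
    rw [hw₂] at hwidthQ
    exact_mod_cast hwidthQ.symm
  have KEY : ∀ x ∈ S, ∀ y ∈ S, ∀ z ∈ T, ∀ w ∈ T,
      |((detZ (y - x) (w - z) : ℤ) : ℝ)| ≤ mixedArea P Q := by
    intro x hx y hy z hz w hw
    have h := MAG.key' hPc hPk hQc hQk (hmemP x hx) (hmemP y hy) (hmemQ z hz) (hmemQ w hw)
    rw [MAG.detR_embed_sub] at h
    unfold mixedArea
    linarith
  have h0 : 0 ≤ mixedArea P Q := by
    have h := KEY pm hpm pm hpm qm hqm qm hqm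
    calc (0:ℝ) ≤ |((detZ (pm - pm) (qm - qm) : ℤ) : ℝ)| := abs_nonneg _
      _ ≤ _ := h
  set D := Nat.gcd w₁ w₂ with hD
  rcases Nat.eq_zero_or_pos w₁ with hw10 | hw1pos
  · right
    refine le_trans ?_ h0
    refine le_trans (le_trans (min_le_right _ _) (min_le_left _ _)) ?_
    rw [hw10]
    simp
  rcases Nat.eq_zero_or_pos w₂ with hw20 | hw2pos
  · right
    refine le_trans ?_ h0
    refine le_trans (le_trans (min_le_right _ _) (min_le_right _ _)) ?_
    rw [hw20]
    simp
  have hDpos : 0 < D := Nat.gcd_pos_of_pos_left _ hw1pos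
  have hDdvd1 : D ∣ w₁ := Nat.gcd_dvd_left _ _
  have hDdvd2 : D ∣ w₂ := Nat.gcd_dvd_right _ _
  have hDgcd : D = Nat.gcd w₁ w₂ := hD
  clear_value D
  have hDR : ((D:ℝ)) ≠ 0 := by positivity
  obtain ⟨v1, v2, hv⟩ : ∃ v1 v2 : ℤ, u.1 * v1 + u.2 * v2 = 1 := by
    refine ⟨Int.gcdA u.1 u.2, Int.gcdB u.1 u.2, ?_⟩
    have h := Int.gcd_eq_gcd_ab u.1 u.2
    rw [hu] at h
    exact h.symm
  set a := pM - pm with ha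
  set b := qM - qm with hb
  have hlza : lz u a = (w₁:ℤ) := by
    have h : lz u a = lz u pM - lz u pm := by
      simp only [ha, lz, Prod.fst_sub, Prod.snd_sub]; ring
    rw [h, hw1']
  have hlzb : lz u b = (w₂:ℤ) := by
    have h : lz u b = lz u qM - lz u qm := by
      simp only [hb, lz, Prod.fst_sub, Prod.snd_sub]; ring
    rw [h, hw2']
  clear_value a b
  obtain ⟨α, hαdec⟩ := MAG.decomp hv a
  obtain ⟨β, hβdec⟩ := MAG.decomp hv b
  rw [hlza] at hαdec
  rw [hlzb] at hβdec
  have ha1 : a.1 = (w₁:ℤ) * v1 + α * (-u.2) := by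
    rw [hαdec]; simp [Prod.fst_add, Prod.smul_fst, smul_eq_mul]
  have ha2 : a.2 = (w₁:ℤ) * v2 + α * u.1 := by
    rw [hαdec]; simp [Prod.snd_add, Prod.smul_snd, smul_eq_mul]
  have hb1 : b.1 = (w₂:ℤ) * v1 + β * (-u.2) := by
    rw [hβdec]; simp [Prod.fst_add, Prod.smul_fst, smul_eq_mul]
  have hb2 : b.2 = (w₂:ℤ) * v2 + β * u.1 := by
    rw [hβdec]; simp [Prod.snd_add, Prod.smul_snd, smul_eq_mul]
  have hdetab : detZ a b = (w₁:ℤ) * β - (w₂:ℤ) * α := by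
    simp only [detZ]
    rw [ha1, ha2, hb1, hb2]
    linear_combination ((w₁:ℤ) * β - (w₂:ℤ) * α) * hv
  by_cases hD0 : detZ a b = 0
  · -- parallel case
    obtain ⟨m, hmEq⟩ := hDdvd1
    obtain ⟨n, hnEq⟩ := hDdvd2
    have hmpos : 0 < m := by
      rcases Nat.eq_zero_or_pos m with h | h
      · rw [h, Nat.mul_zero] at hmEq; omega
      · exact h
    have hnpos : 0 < n := by
      rcases Nat.eq_zero_or_pos n with h | h
      · rw [h, Nat.mul_zero] at hnEq; omega
      · exact h
    have hmn : Nat.Coprime m n := by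
      have h1 : m = w₁ / D := by
        rw [hmEq]; exact (Nat.mul_div_cancel_left m hDpos).symm
      have h2 : n = w₂ / D := by
        rw [hnEq]; exact (Nat.mul_div_cancel_left n hDpos).symm
      rw [h1, h2, hDgcd]
      exact Nat.coprime_div_gcd_div_gcd (hDgcd ▸ hDpos)
    have heqw : (w₁:ℤ) * β = (w₂:ℤ) * α := by
      rw [hdetab] at hD0; linarith
    have hmZ : ((m:ℤ)) ≠ 0 := by exact_mod_cast hmpos.ne'
    have hDZ : ((D:ℤ)) ≠ 0 := by exact_mod_cast hDpos.ne'
    have heq : (m:ℤ) * β = (n:ℤ) * α := by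
      apply mul_left_cancel₀ hDZ
      have h1 : ((w₁:ℤ)) = (D:ℤ) * m := by exact_mod_cast hmEq
      have h2 : ((w₂:ℤ)) = (D:ℤ) * n := by exact_mod_cast hnEq
      rw [h1, h2] at heqw
      linarith
    have hmdvd : (m:ℤ) ∣ α := by
      have hcop : Int.gcd (m:ℤ) (n:ℤ) = 1 := by
        rw [Int.gcd_natCast_natCast]; exact hmn
      exact Int.dvd_of_dvd_mul_right_of_gcd_one ⟨β, heq.symm⟩ hcop
    obtain ⟨t, hα⟩ := hmdvd
    have hβt : β = (n:ℤ) * t := by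
      apply mul_left_cancel₀ hmZ
      rw [heq, hα]; ring
    set cz : ℤ × ℤ := ((D:ℤ) * v1 - t * u.2, (D:ℤ) * v2 + t * u.1) with hcz
    have hac1 : a.1 = (m:ℤ) * cz.1 := by
      rw [ha1, hα]
      have h1 : ((w₁:ℤ)) = (D:ℤ) * m := by exact_mod_cast hmEq
      rw [h1]; simp only [hcz]; ring
    have hac2 : a.2 = (m:ℤ) * cz.2 := by
      rw [ha2, hα]
      have h1 : ((w₁:ℤ)) = (D:ℤ) * m := by exact_mod_cast hmEq
      rw [h1]; simp only [hcz]; ring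
    have hbc1 : b.1 = (n:ℤ) * cz.1 := by
      rw [hb1, hβt]
      have h2 : ((w₂:ℤ)) = (D:ℤ) * n := by exact_mod_cast hnEq
      rw [h2]; simp only [hcz]; ring
    have hbc2 : b.2 = (n:ℤ) * cz.2 := by
      rw [hb2, hβt]
      have h2 : ((w₂:ℤ)) = (D:ℤ) * n := by exact_mod_cast hnEq
      rw [h2]; simp only [hcz]; ring
    have hlzcz : lz u cz = (D:ℤ) := by
      simp only [lz, hcz]
      linear_combination (D:ℤ) * hv
    clear_value cz
    have hEczne : latticeEmbed cz ≠ 0 := by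
      intro h
      have h1 : (cz.1 : ℝ) = 0 := congrArg Prod.fst h
      have h2 : (cz.2 : ℝ) = 0 := congrArg Prod.snd h
      have hc1 : cz.1 = 0 := by exact_mod_cast h1
      have hc2 : cz.2 = 0 := by exact_mod_cast h2
      have hcz0 : cz = 0 := Prod.ext hc1 hc2
      rw [hcz0] at hlzcz
      simp only [lz, Prod.fst_zero, Prod.snd_zero, zero_mul, add_zero, zero_add] at hlzcz
      exact hDZ hlzcz.symm
    by_cases hPline : ∀ s ∈ S, detZ (s - pm) cz = 0
    · by_cases hQline : ∀ s ∈ T, detZ (s - qm) cz = 0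
      · -- everything on parallel lines: mixed area zero
        left
        have hlineP : ∀ x ∈ P, ∃ τ : ℝ, x = latticeEmbed pm + τ • latticeEmbed cz := by
          intro x hx
          rw [hPdef] at hx
          have hsub : convexHull ℝ (latticeEmbed '' (S : Set (ℤ × ℤ)))
              ⊆ {x : ℝ × ℝ | ∃ τ : ℝ, x = latticeEmbed pm + τ • latticeEmbed cz} := by
            apply convexHull_min _ (MAG.line_convex _ _)
            rintro _ ⟨s, hs, rfl⟩
            have hdz : detR (latticeEmbed s - latticeEmbed pm) (latticeEmbed cz) = 0 := by
              rw [MAG.detR_embed_sub1 pm s cz, hPline s hs]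
              simp
            obtain ⟨τ, hτ⟩ := MAG.detR_zero_mem_span hEczne hdz
            exact ⟨τ, by rw [← hτ]; abel⟩
          exact hsub hx
        have hlineQ : ∀ x ∈ Q, ∃ τ : ℝ, x = latticeEmbed qm + τ • latticeEmbed cz := by
          intro x hx
          rw [hQdef] at hx
          have hsub : convexHull ℝ (latticeEmbed '' (T : Set (ℤ × ℤ)))
              ⊆ {x : ℝ × ℝ | ∃ τ : ℝ, x = latticeEmbed qm + τ • latticeEmbed cz} := by
            apply convexHull_min _ (MAG.line_convex _ _)
            rintro _ ⟨s, hs, rfl⟩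
            have hdz : detR (latticeEmbed s - latticeEmbed qm) (latticeEmbed cz) = 0 := by
              rw [MAG.detR_embed_sub1 qm s cz, hQline s hs]
              simp
            obtain ⟨τ, hτ⟩ := MAG.detR_zero_mem_span hEczne hdz
            exact ⟨τ, by rw [← hτ]; abel⟩
          exact hsub hx
        have hvolP : volume P = 0 := MAG.vol_line_zero hEczne hlineP
        have hvolQ : volume Q = 0 := MAG.vol_line_zero hEczne hlineQ
        have hvolPQ : volume (P + Q) = 0 := by
          apply MAG.vol_line_zero hEczne (p := latticeEmbed pm + latticeEmbed qm)
          intro x hx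
          obtain ⟨y, hy, z, hz, rfl⟩ := Set.mem_add.1 hx
          obtain ⟨τ1, h1⟩ := hlineP y hy
          obtain ⟨τ2, h2⟩ := hlineQ z hz
          refine ⟨τ1 + τ2, ?_⟩
          rw [h1, h2, add_smul]
          abel
        unfold mixedArea
        rw [hvolP, hvolQ, hvolPQ]
        simp
      · -- Q has a point off the line
        push_neg at hQline
        obtain ⟨s₀, hs₀, hds⟩ := hQline
        right
        have h2ne : detZ cz (s₀ - qm) ≠ 0 := by
          intro h
          apply hds
          simp only [detZ] at h ⊢
          linarith
        have h1 : detZ a (s₀ - qm) = (m:ℤ) * detZ cz (s₀ - qm) := by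
          simp only [detZ, hac1, hac2]; ring
        have hmle : (m:ℤ) ≤ |detZ a (s₀ - qm)| := by
          rw [h1, abs_mul, abs_of_nonneg (by positivity : (0:ℤ) ≤ (m:ℤ))]
          have h1le : (1:ℤ) ≤ |detZ cz (s₀ - qm)| := Int.one_le_abs h2ne
          nlinarith [Int.natCast_pos.2 hmpos]
        have hkey := KEY pm hpm pM hpM qm hqm s₀ hs₀
        rw [← ha] at hkey
        refine le_trans (le_trans (le_trans (min_le_right _ _) (min_le_left _ _)) ?_) hkey
        have hw1m : (w₁:ℝ) / (D:ℝ) = (m:ℝ) := by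
          rw [hmEq]; push_cast; field_simp
        rw [hw1m, ← Int.cast_abs]
        exact_mod_cast hmle
    · -- P has a point off the line
      push_neg at hPline
      obtain ⟨s₀, hs₀, hds⟩ := hPline
      right
      have h1 : detZ (s₀ - pm) b = (n:ℤ) * detZ (s₀ - pm) cz := by
        simp only [detZ, hbc1, hbc2]; ring
      have hnle : (n:ℤ) ≤ |detZ (s₀ - pm) b| := by
        rw [h1, abs_mul, abs_of_nonneg (by positivity : (0:ℤ) ≤ (n:ℤ))]
        have h1le : (1:ℤ) ≤ |detZ (s₀ - pm) cz| := Int.one_le_abs hds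
        nlinarith [Int.natCast_pos.2 hnpos]
      have hkey := KEY pm hpm s₀ hs₀ qm hqm qM hqM
      rw [← hb] at hkey
      refine le_trans (le_trans (le_trans (min_le_right _ _) (min_le_right _ _)) ?_) hkey
      have hw2n : (w₂:ℝ) / (D:ℝ) = (n:ℝ) := by
        rw [hnEq]; push_cast; field_simp
      rw [hw2n, ← Int.cast_abs]
      exact_mod_cast hnle
  · -- determinant nonzero case
    right
    have hdvd : (D:ℤ) ∣ detZ a b := by
      rw [hdetab]
      exact dvd_sub (Dvd.dvd.mul_right (Int.natCast_dvd_natCast.2 hDdvd1) β)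
        (Dvd.dvd.mul_right (Int.natCast_dvd_natCast.2 hDdvd2) α)
    have hle : (D:ℤ) ≤ |detZ a b| := Int.le_of_dvd (abs_pos.2 hD0) ((dvd_abs _ _).2 hdvd)
    have hkey := KEY pm hpm pM hpM qm hqm qM hqM
    rw [← ha, ← hb] at hkey
    refine le_trans (le_trans (min_le_left _ _) ?_) hkey
    rw [← Int.cast_abs]
    exact_mod_cast hle
end

section
/- Let w₁, w₂ ∈ ℤ be positive integers, let v ∈ ℤ≥0 satisfy v ≥ min{ w₁ mod w₂, w₂ mod w₁ }, and let u ∈ ℤ² be a primitive vector. Then there exist lattice polytopes P, Q in ℝ² such that w_u(P) = w₁, w_u(Q) = w₂, and V(P,Q) = v. Here m mod n denotes the remainder of m upon division by n. -/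
open MeasureTheory Pointwise

namespace DiagSat

/-- The master shape: a convex region under the min of two affine functions. -/
def shape (a₁ b₁ a₂ b₂ H : ℝ) : Set (ℝ × ℝ) :=
  {p | 0 ≤ p.2 ∧ p.2 ≤ H ∧ 0 ≤ p.1 ∧ p.1 ≤ a₁ + b₁ * p.2 ∧ p.1 ≤ a₂ + b₂ * p.2}

lemma affine_nonneg {c d p q y : ℝ} (hp : 0 ≤ c + d * p) (hq : 0 ≤ c + d * q)
    (h1 : p ≤ y) (h2 : y ≤ q) : 0 ≤ c + d * y := by
  rcases eq_or_lt_of_le (h1.trans h2) with h | h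
  · have : y = p := le_antisymm (h ▸ h2) h1
    linarith [this ▸ hp]
  · nlinarith [mul_nonneg (sub_nonneg.2 h2) hp, mul_nonneg (sub_nonneg.2 h1) hq]

lemma shape_convex (a₁ b₁ a₂ b₂ H : ℝ) : Convex ℝ (shape a₁ b₁ a₂ b₂ H) := by
  rintro ⟨x1, y1⟩ ⟨hA1, hA2, hA3, hA4, hA5⟩ ⟨x2, y2⟩ ⟨hB1, hB2, hB3, hB4, hB5⟩ s t hs ht hst
  simp only [shape, Set.mem_setOf_eq, Prod.smul_mk, Prod.mk_add_mk, smul_eq_mul] at *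
  have ht1 : t = 1 - s := by linarith
  subst ht1
  refine ⟨by nlinarith, by nlinarith, by nlinarith,
    by nlinarith [mul_le_mul_of_nonneg_left hA4 hs, mul_le_mul_of_nonneg_left hB4 ht],
    by nlinarith [mul_le_mul_of_nonneg_left hA5 hs, mul_le_mul_of_nonneg_left hB5 ht]⟩

lemma shape_closed (a₁ b₁ a₂ b₂ H : ℝ) : IsClosed (shape a₁ b₁ a₂ b₂ H) := by
  have h1 : IsClosed {p : ℝ × ℝ | 0 ≤ p.2} := isClosed_le continuous_const continuous_snd
  have h2 : IsClosed {p : ℝ × ℝ | p.2 ≤ H} := isClosed_le continuous_snd continuous_const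
  have h3 : IsClosed {p : ℝ × ℝ | 0 ≤ p.1} := isClosed_le continuous_const continuous_fst
  have h4 : IsClosed {p : ℝ × ℝ | p.1 ≤ a₁ + b₁ * p.2} :=
    isClosed_le continuous_fst (by continuity)
  have h5 : IsClosed {p : ℝ × ℝ | p.1 ≤ a₂ + b₂ * p.2} :=
    isClosed_le continuous_fst (by continuity)
  have : shape a₁ b₁ a₂ b₂ H =
      ({p : ℝ × ℝ | 0 ≤ p.2} ∩ {p | p.2 ≤ H} ∩ {p | 0 ≤ p.1} ∩ {p | p.1 ≤ a₁ + b₁ * p.2}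
        ∩ {p | p.1 ≤ a₂ + b₂ * p.2}) := by
    ext p; simp only [shape, Set.mem_setOf_eq, Set.mem_inter_iff]; tauto
  rw [this]
  exact (((h1.inter h2).inter h3).inter h4).inter h5


lemma mem_segment_pair {q r : ℝ × ℝ} {t : ℝ} (h0 : 0 ≤ t) (h1 : t ≤ 1) {p : ℝ × ℝ}
    (hp1 : p.1 = (1 - t) * q.1 + t * r.1) (hp2 : p.2 = (1 - t) * q.2 + t * r.2) :
    p ∈ segment ℝ q r := by
  refine ⟨1 - t, t, by linarith, h0, by ring, ?_⟩
  ext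
  · simpa using hp1.symm
  · simpa using hp2.symm

/-- point on the segment between two points on a line `x = c + d*y`. -/
lemma mem_segment_line {c d y₁ y₂ y : ℝ} (h1 : y₁ ≤ y) (h2 : y ≤ y₂) :
    ((c + d * y, y) : ℝ × ℝ) ∈ segment ℝ (c + d * y₁, y₁) (c + d * y₂, y₂) := by
  rcases eq_or_lt_of_le (h1.trans h2) with h | h
  · have hy : y = y₁ := le_antisymm (h ▸ h2) h1
    subst hy; exact left_mem_segment _ _ _
  · have hne : y₂ - y₁ ≠ 0 := by linarith
    refine mem_segment_pair (t := (y - y₁) / (y₂ - y₁))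
      (div_nonneg (by linarith) (by linarith))
      (by rw [div_le_one (by linarith)]; linarith) ?_ ?_ <;> field_simp <;> ring
lemma mem_segment_horiz {x₁ x₂ x y : ℝ} (h1 : x₁ ≤ x) (h2 : x ≤ x₂) :
    ((x, y) : ℝ × ℝ) ∈ segment ℝ (x₁, y) (x₂, y) := by
  rcases eq_or_lt_of_le (h1.trans h2) with h | h
  · have hx : x = x₁ := le_antisymm (h ▸ h2) h1
    subst hx; exact left_mem_segment _ _ _
  · have hne : x₂ - x₁ ≠ 0 := by linarith
    refine mem_segment_pair (t := (x - x₁) / (x₂ - x₁))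
      (div_nonneg (by linarith) (by linarith))
      (by rw [div_le_one (by linarith)]; linarith) ?_ ?_ <;> field_simp <;> ring


lemma shape_eq_hull {a₁ b₁ a₂ b₂ y₀ H : ℝ} (h0 : 0 ≤ y₀) (hH : y₀ ≤ H)
    (heq : a₁ + b₁ * y₀ = a₂ + b₂ * y₀) (hb : b₂ ≤ b₁) (ha : 0 ≤ a₁)
    (haH : 0 ≤ a₂ + b₂ * H) :
    shape a₁ b₁ a₂ b₂ H = convexHull ℝ
      {((0:ℝ), (0:ℝ)), (a₁, 0), (a₁ + b₁ * y₀, y₀), (a₂ + b₂ * H, H), (0, H)} := by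
  have hHnn : (0:ℝ) ≤ H := h0.trans hH
  have ha₂ : 0 ≤ a₂ := by nlinarith [mul_nonneg (sub_nonneg.2 hb) h0]
  have hmid : 0 ≤ a₂ + b₂ * y₀ :=
    affine_nonneg (p := 0) (q := H) (by simpa using ha₂) haH h0 hH
  have hmid1 : 0 ≤ a₁ + b₁ * y₀ := heq ▸ hmid
  have haa : a₁ ≤ a₂ := by nlinarith [mul_nonneg (sub_nonneg.2 hb) h0]
  have htop1 : a₂ + b₂ * H ≤ a₁ + b₁ * H := by
    nlinarith [mul_nonneg (sub_nonneg.2 hb) (sub_nonneg.2 hH)]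
  have htop0 : 0 ≤ a₁ + b₁ * H := haH.trans htop1
  set S : Set (ℝ × ℝ) :=
    {((0:ℝ), (0:ℝ)), (a₁, 0), (a₁ + b₁ * y₀, y₀), (a₂ + b₂ * H, H), (0, H)} with hS
  apply Set.Subset.antisymm
  · -- shape ⊆ hull
    intro p hp
    obtain ⟨h1, h2, h3, h4, h5⟩ := hp
    have hcv := convex_convexHull ℝ S
    have hv0 : ((0:ℝ), (0:ℝ)) ∈ convexHull ℝ S := subset_convexHull _ _ (by simp [hS])
    have hv1 : ((a₁ : ℝ), (0:ℝ)) ∈ convexHull ℝ S := subset_convexHull _ _ (by simp [hS])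
    have hv2 : ((a₁ + b₁ * y₀, y₀) : ℝ × ℝ) ∈ convexHull ℝ S :=
      subset_convexHull _ _ (by simp [hS])
    have hv3 : ((a₂ + b₂ * H, H) : ℝ × ℝ) ∈ convexHull ℝ S :=
      subset_convexHull _ _ (by simp [hS])
    have hv4 : (((0:ℝ), H) : ℝ × ℝ) ∈ convexHull ℝ S := subset_convexHull _ _ (by simp [hS])
    have hleft : (((0:ℝ), p.2) : ℝ × ℝ) ∈ convexHull ℝ S := by
      have := mem_segment_line (c := 0) (d := 0) h1 h2
      simpa using hcv.segment_subset hv0 hv4 (by simpa using this)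
    by_cases hy : p.2 ≤ y₀
    · have hedge : ((a₁ + b₁ * p.2, p.2) : ℝ × ℝ) ∈ convexHull ℝ S := by
        have := mem_segment_line (c := a₁) (d := b₁) h1 hy
        exact hcv.segment_subset (by simpa using hv1) hv2 this
      have := mem_segment_horiz h3 h4 (y := p.2)
      simpa using hcv.segment_subset hleft hedge (by simpa using this)
    · push_neg at hy
      have hedge : ((a₂ + b₂ * p.2, p.2) : ℝ × ℝ) ∈ convexHull ℝ S := by
        have := mem_segment_line (c := a₂) (d := b₂) hy.le h2
        exact hcv.segment_subset (by rw [← heq] at this ⊢; exact hv2) hv3 this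
      have := mem_segment_horiz h3 h5 (y := p.2)
      simpa using hcv.segment_subset hleft hedge (by simpa using this)
  · -- hull ⊆ shape
    apply convexHull_min _ (shape_convex a₁ b₁ a₂ b₂ H)
    rintro p (rfl | rfl | rfl | rfl | rfl)
    · exact ⟨le_refl _, hHnn, le_refl _, by simpa using ha, by simpa using ha₂⟩
    · exact ⟨le_refl _, hHnn, ha, by simp, by simpa using haa⟩
    · exact ⟨h0, hH, hmid1, le_refl _, heq.le⟩
    · exact ⟨hHnn, le_refl _, haH, htop1, le_refl _⟩
    · exact ⟨hHnn, le_refl _, le_refl _, htop0, haH⟩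


lemma shape_volume {a₁ b₁ a₂ b₂ y₀ H : ℝ} (h0 : 0 ≤ y₀) (hH : y₀ ≤ H)
    (heq : a₁ + b₁ * y₀ = a₂ + b₂ * y₀) (hb : b₂ ≤ b₁) (ha : 0 ≤ a₁)
    (haH : 0 ≤ a₂ + b₂ * H) :
    volume (shape a₁ b₁ a₂ b₂ H) = ENNReal.ofReal
      ((a₁ * y₀ + b₁ * y₀ ^ 2 / 2) + (a₂ * H + b₂ * H ^ 2 / 2) - (a₂ * y₀ + b₂ * y₀ ^ 2 / 2)) := by
  have hHnn : (0:ℝ) ≤ H := h0.trans hH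
  have ha₂ : 0 ≤ a₂ := by nlinarith [mul_nonneg (sub_nonneg.2 hb) h0]
  -- g y := min (a₁+b₁*y) (a₂+b₂*y)
  set g : ℝ → ℝ := fun y => min (a₁ + b₁ * y) (a₂ + b₂ * y) with hg
  have hgcont : Continuous g := by fun_prop
  have hg1 : ∀ y, 0 ≤ y → y ≤ y₀ → g y = a₁ + b₁ * y := by
    intro y hy hy'
    apply min_eq_left
    nlinarith [mul_nonneg (sub_nonneg.2 hb) (sub_nonneg.2 hy')]
  have hg2 : ∀ y, y₀ ≤ y → y ≤ H → g y = a₂ + b₂ * y := by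
    intro y hy hy'
    apply min_eq_right
    nlinarith [mul_nonneg (sub_nonneg.2 hb) (sub_nonneg.2 hy)]
  have hgnn : ∀ y ∈ Set.Icc (0:ℝ) H, 0 ≤ g y := by
    intro y hy
    rcases le_total y y₀ with h | h
    · rw [hg1 y hy.1 h]
      exact affine_nonneg (p := 0) (q := y₀) (by simpa using ha) (heq ▸
        (affine_nonneg (p := 0) (q := H) (by simpa using ha₂) haH h0 hH)) hy.1 h
    · rw [hg2 y h hy.2]
      exact affine_nonneg (p := y₀) (q := H)
        (affine_nonneg (p := 0) (q := H) (by simpa using ha₂) haH h0 hH) haH h hy.2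
  -- slices
  have hmeas : MeasurableSet (shape a₁ b₁ a₂ b₂ H) := (shape_closed _ _ _ _ _).measurableSet
  have hslice : (fun y => volume ((fun x => (x, y)) ⁻¹' shape a₁ b₁ a₂ b₂ H))
      = (Set.Icc (0:ℝ) H).indicator (fun y => ENNReal.ofReal (g y)) := by
    funext y
    by_cases hy : y ∈ Set.Icc (0:ℝ) H
    · have : ((fun x => (x, y)) ⁻¹' shape a₁ b₁ a₂ b₂ H) = Set.Icc 0 (g y) := by
        ext x
        simp only [shape, Set.mem_preimage, Set.mem_setOf_eq, Set.mem_Icc, hg, le_min_iff]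
        constructor
        · rintro ⟨_, _, h3, h4, h5⟩; exact ⟨h3, h4, h5⟩
        · rintro ⟨h3, h4, h5⟩; exact ⟨hy.1, hy.2, h3, h4, h5⟩
      rw [this, Real.volume_Icc, Set.indicator_of_mem hy]
      simp
    · have : ((fun x => (x, y)) ⁻¹' shape a₁ b₁ a₂ b₂ H) = ∅ := by
        ext x
        simp only [shape, Set.mem_preimage, Set.mem_setOf_eq, Set.mem_empty_iff_false,
          iff_false]
        simp only [Set.mem_Icc, not_and_or, not_le] at hy
        rintro ⟨h1, h2, -⟩
        rcases hy with h | h <;> linarith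
      rw [this, Set.indicator_of_notMem hy]
      simp
  have hvol : volume (shape a₁ b₁ a₂ b₂ H) = ∫⁻ y in Set.Icc (0:ℝ) H, ENNReal.ofReal (g y) := by
    rw [MeasureTheory.Measure.volume_eq_prod, Measure.prod_apply_symm hmeas]
    rw [hslice, lintegral_indicator measurableSet_Icc _]
  -- from lintegral to integral
  have hgint : IntegrableOn g (Set.Icc (0:ℝ) H) := hgcont.integrableOn_Icc
  have hlint : ∫⁻ y in Set.Icc (0:ℝ) H, ENNReal.ofReal (g y)
      = ENNReal.ofReal (∫ y in Set.Icc (0:ℝ) H, g y) := by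
    rw [← MeasureTheory.ofReal_integral_eq_lintegral_ofReal hgint]
    exact (ae_restrict_iff' measurableSet_Icc).2 (Filter.Eventually.of_forall hgnn)
  -- compute the integral
  have hsplit : ∫ y in Set.Icc (0:ℝ) H, g y
      = (a₁ * y₀ + b₁ * y₀ ^ 2 / 2) + (a₂ * H + b₂ * H ^ 2 / 2) - (a₂ * y₀ + b₂ * y₀ ^ 2 / 2) := by
    rw [MeasureTheory.integral_Icc_eq_integral_Ioc,
      ← intervalIntegral.integral_of_le hHnn,
      ← intervalIntegral.integral_add_adjacent_intervals
        (a := 0) (b := y₀) (c := H)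
        (hgcont.intervalIntegrable _ _) (hgcont.intervalIntegrable _ _)]
    have e1 : ∫ y in (0:ℝ)..y₀, g y = ∫ y in (0:ℝ)..y₀, (a₁ + b₁ * y) := by
      apply intervalIntegral.integral_congr
      intro y hy
      rw [Set.uIcc_of_le h0] at hy
      exact hg1 y hy.1 hy.2
    have e2 : ∫ y in y₀..H, g y = ∫ y in y₀..H, (a₂ + b₂ * y) := by
      apply intervalIntegral.integral_congr
      intro y hy
      rw [Set.uIcc_of_le hH] at hy
      exact hg2 y hy.1 hy.2
    have aff : ∀ c d p q : ℝ, ∫ y in p..q, (c + d * y) = c * (q - p) + d * (q^2 - p^2) / 2 := by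
      intro c d p q
      have h2 : IntervalIntegrable (fun y : ℝ => d * y) volume p q :=
        (continuous_const.mul continuous_id).intervalIntegrable _ _
      rw [intervalIntegral.integral_add intervalIntegrable_const h2,
        intervalIntegral.integral_const, intervalIntegral.integral_const_mul, integral_id]
      simp only [smul_eq_mul]
      ring
    rw [e1, e2, aff, aff]
    ring
  rw [hvol, hlint, hsplit]


lemma funct_linear (u : ℤ × ℤ) : IsLinearMap ℝ (fun x : ℝ × ℝ => x.1 * u.1 + x.2 * u.2) := by
  constructor
  · intro p q; simp only [Prod.fst_add, Prod.snd_add]; ring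
  · intro c p; simp only [Prod.smul_fst, Prod.smul_snd, smul_eq_mul]; ring

lemma latticeWidth_hull (u : ℤ × ℤ) (F : Set (ℝ × ℝ)) (pM pm : ℝ × ℝ)
    (hM : pM ∈ F) (hm : pm ∈ F)
    (hub : ∀ z ∈ F, z.1 * u.1 + z.2 * u.2 ≤ pM.1 * u.1 + pM.2 * u.2)
    (hlb : ∀ z ∈ F, pm.1 * u.1 + pm.2 * u.2 ≤ z.1 * u.1 + z.2 * u.2) :
    latticeWidth u (convexHull ℝ F) =
      (pM.1 * u.1 + pM.2 * u.2) - (pm.1 * u.1 + pm.2 * u.2) := by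
  set f : ℝ × ℝ → ℝ := fun x => x.1 * u.1 + x.2 * u.2 with hf
  have hsup : IsGreatest (f '' convexHull ℝ F) (f pM) := by
    constructor
    · exact Set.mem_image_of_mem f (subset_convexHull _ _ hM)
    · rintro _ ⟨z, hz, rfl⟩
      exact convexHull_min hub (convex_halfSpace_le (funct_linear u) _) hz
  have hinf : IsLeast (f '' convexHull ℝ F) (f pm) := by
    constructor
    · exact Set.mem_image_of_mem f (subset_convexHull _ _ hm)
    · rintro _ ⟨z, hz, rfl⟩
      exact convexHull_min hlb (convex_halfSpace_ge (funct_linear u) _) hz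
  unfold latticeWidth
  rw [hsup.csSup_eq, hinf.csInf_eq]

lemma transfer (u : ℤ × ℤ) (hu : Int.gcd u.1 u.2 = 1) (t : ℤ)
    (SP SQ : Finset (ℤ × ℤ)) (hSP : SP.Nonempty) (hSQ : SQ.Nonempty)
    (W₁ W₂ Vv : ℝ)
    (hw1 : latticeWidth (1, t) (convexHull ℝ (latticeEmbed '' SP)) = W₁)
    (hw2 : latticeWidth (1, t) (convexHull ℝ (latticeEmbed '' SQ)) = W₂)
    (hv : mixedArea (convexHull ℝ (latticeEmbed '' SP)) (convexHull ℝ (latticeEmbed '' SQ)) = Vv) :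
    ∃ P Q : Set (ℝ × ℝ), IsLatticePolytope P ∧ IsLatticePolytope Q ∧
      latticeWidth u P = W₁ ∧ latticeWidth u Q = W₂ ∧ mixedArea P Q = Vv := by
  set α := Int.gcdA u.1 u.2 with hα
  set β := Int.gcdB u.1 u.2 with hβ
  have hbez : (1 : ℤ) = u.1 * α + u.2 * β := by
    rw [hα, hβ, ← Int.gcd_eq_gcd_ab, hu]; norm_num
  have hbezR : (1 : ℝ) = (u.1 : ℝ) * α + (u.2 : ℝ) * β := by exact_mod_cast hbez
  clear_value α β
  set M : Matrix (Fin 2) (Fin 2) ℝ :=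
    !![(α : ℝ), ((t * α - u.2 : ℤ) : ℝ); (β : ℝ), ((t * β + u.1 : ℤ) : ℝ)] with hM
  set L : (ℝ × ℝ) →ₗ[ℝ] (ℝ × ℝ) := Matrix.toLin (Module.Basis.finTwoProd ℝ) (Module.Basis.finTwoProd ℝ) M
    with hLdef
  have hL : ∀ z : ℝ × ℝ, L z = ((α : ℝ) * z.1 + ((t * α - u.2 : ℤ) : ℝ) * z.2,
      (β : ℝ) * z.1 + ((t * β + u.1 : ℤ) : ℝ) * z.2) := by
    intro z
    rw [hLdef, hM, Matrix.toLin_finTwoProd_apply]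
  have hdet : LinearMap.det L = 1 := by
    rw [hLdef, hM, LinearMap.det_toLin, Matrix.det_fin_two_of]
    push_cast
    linear_combination (-hbezR)
  have hφ : ∀ z : ℝ × ℝ, (L z).1 * u.1 + (L z).2 * u.2
      = z.1 * (((1:ℤ) : ℝ)) + z.2 * ((t : ℤ) : ℝ) := by
    intro z
    rw [hL]
    push_cast
    linear_combination (-(z.1 + (t : ℝ) * z.2)) * hbezR
  have himgf : ∀ K : Set (ℝ × ℝ),
      ((fun x : ℝ × ℝ => x.1 * u.1 + x.2 * u.2) '' (L '' K))
        = ((fun x : ℝ × ℝ => x.1 * (((1:ℤ),(t:ℤ)) : ℤ × ℤ).1 + x.2 * (((1:ℤ),(t:ℤ)) : ℤ × ℤ).2) '' K) := by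
    intro K
    rw [← Set.image_comp]
    exact Set.image_congr' (fun z => hφ z)
  have hwidth : ∀ K : Set (ℝ × ℝ), latticeWidth u (L '' K) = latticeWidth (1, t) K := by
    intro K
    unfold latticeWidth
    rw [himgf K]
  have hvolL : ∀ K : Set (ℝ × ℝ), volume (L '' K) = volume K := by
    intro K
    rw [Measure.addHaar_image_linearMap, hdet]
    simp
  -- lattice map
  set Mz : ℤ × ℤ → ℤ × ℤ :=
    fun p => (α * p.1 + (t * α - u.2) * p.2, β * p.1 + (t * β + u.1) * p.2) with hMz
  have hLemb : ∀ p : ℤ × ℤ, L (latticeEmbed p) = latticeEmbed (Mz p) := by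
    intro p
    rw [hL, hMz]
    simp only [latticeEmbed]
    push_cast
    rfl
  have hlat : ∀ S : Finset (ℤ × ℤ),
      L '' (convexHull ℝ (latticeEmbed '' S)) = convexHull ℝ (latticeEmbed '' (S.image Mz)) := by
    intro S
    rw [L.image_convexHull, Finset.coe_image]
    congr 1
    rw [Set.image_image, Set.image_image]
    exact Set.image_congr' (fun p => hLemb p)
  refine ⟨L '' (convexHull ℝ (latticeEmbed '' SP)), L '' (convexHull ℝ (latticeEmbed '' SQ)),
    ⟨SP.image Mz, hSP.image _, (hlat SP)⟩, ⟨SQ.image Mz, hSQ.image _, (hlat SQ)⟩,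
    by rw [hwidth, hw1], by rw [hwidth, hw2], ?_⟩
  have haddL : L '' (convexHull ℝ (latticeEmbed '' SP)) + L '' (convexHull ℝ (latticeEmbed '' SQ))
      = L '' ((convexHull ℝ (latticeEmbed '' SP)) + (convexHull ℝ (latticeEmbed '' SQ))) :=
    (Set.image_add L).symm
  rw [mixedArea, haddL, hvolL, hvolL, hvolL, ← mixedArea, hv]


set_option maxHeartbeats 1000000 in
lemma case1 (w₁ w₂ v : ℕ) (hw₁ : 0 < w₁) (hle : w₁ ≤ w₂) (hrv : w₂ % w₁ ≤ v)
    (hvw : v ≤ w₂) :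
    ∃ SP SQ : Finset (ℤ × ℤ), SP.Nonempty ∧ SQ.Nonempty ∧
      latticeWidth (1, -(w₁:ℤ)) (convexHull ℝ (latticeEmbed '' SP)) = (w₁ : ℝ) ∧
      latticeWidth (1, -(w₁:ℤ)) (convexHull ℝ (latticeEmbed '' SQ)) = (w₂ : ℝ) ∧
      mixedArea (convexHull ℝ (latticeEmbed '' SP)) (convexHull ℝ (latticeEmbed '' SQ))
        = (v : ℝ) := by
  set r : ℕ := w₂ % w₁ with hrdef
  set k : ℕ := w₂ / w₁ with hkdef
  have hrw : r < w₁ := Nat.mod_lt _ hw₁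
  have hk1 : 1 ≤ k := (Nat.one_le_div_iff hw₁).2 hle
  have hw2eq : r + w₁ * k = w₂ := Nat.mod_add_div w₂ w₁
  -- real versions
  set R : ℝ := (r : ℝ) with hR
  set K : ℝ := (k : ℝ) with hK
  set W1 : ℝ := (w₁ : ℝ) with hW1
  set W2 : ℝ := (w₂ : ℝ) with hW2
  set V : ℝ := (v : ℝ) with hV
  have hR0 : 0 ≤ R := Nat.cast_nonneg r
  have hV0 : 0 ≤ V := Nat.cast_nonneg v
  have hK1 : 1 ≤ K := by rw [hK]; exact_mod_cast hk1
  have hK0 : 0 < K := lt_of_lt_of_le one_pos hK1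
  have hW1pos : 0 < W1 := by rw [hW1]; exact_mod_cast hw₁
  have hW2eq : R + W1 * K = W2 := by rw [hR, hK, hW1, hW2]; exact_mod_cast hw2eq
  have hRV : R ≤ V := by rw [hR, hV]; exact_mod_cast hrv
  have hVW2 : V ≤ W2 := by rw [hV, hW2]; exact_mod_cast hvw
  set s : ℝ := (V - R) / K with hs_def
  have hs : 0 ≤ s := div_nonneg (by linarith) hK0.le
  have hsK : s * K = V - R := div_mul_cancel₀ _ hK0.ne'
  -- explicit vertex sets
  set A : Set (ℝ × ℝ) := {((0:ℝ),(0:ℝ)), ((0:ℝ),(1:ℝ))} with hA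
  set B : Set (ℝ × ℝ) := {((0:ℝ),(0:ℝ)), (R,0), (0,K), (V,K)} with hB
  set C : Set (ℝ × ℝ) := {((0:ℝ),(0:ℝ)), (R,0), (V,K), (V,K+1), (0,K+1)} with hC
  have ePemb : latticeEmbed '' (↑({((0:ℤ),(0:ℤ)), (0,1)} : Finset (ℤ × ℤ))) = A := by
    rw [hA]; simp [latticeEmbed, Set.image_insert_eq, Prod.ext_iff]
  have eQemb : latticeEmbed ''
      (↑({((0:ℤ),(0:ℤ)), ((r:ℤ),0), (0,(k:ℤ)), ((v:ℤ),(k:ℤ))} : Finset (ℤ × ℤ))) = B := by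
    rw [hB, hR, hK, hV]; simp [latticeEmbed, Set.image_insert_eq, Prod.ext_iff]
  have hRs0 : R + s * 0 = R := by ring
  have hRsK : R + s * K = V := by linarith [hsK]
  have hPsh : shape 0 0 0 0 1 = convexHull ℝ A := by
    rw [shape_eq_hull (y₀ := 0) (le_refl 0) zero_le_one (by norm_num) (le_refl 0) (le_refl 0)
      (by norm_num), hA]
    norm_num
  have hQsh : shape R s R s K = convexHull ℝ B := by
    rw [shape_eq_hull (y₀ := 0) (le_refl 0) hK0.le rfl (le_refl s) hR0 (by linarith), hB]
    rw [hRs0, hRsK]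
    congr 1
    ext z
    simp only [Set.mem_insert_iff, Set.mem_singleton_iff]
    tauto
  have hSsh : shape R s V 0 (K + 1) = convexHull ℝ C := by
    rw [shape_eq_hull (y₀ := K) hK0.le (by linarith) (by linarith [hsK]) hs hR0
      (by linarith), hC]
    rw [hRsK]
    norm_num
  have hAsub : A ⊆ shape 0 0 0 0 1 := hPsh ▸ subset_convexHull ℝ A
  have hBsub : B ⊆ shape R s R s K := hQsh ▸ subset_convexHull ℝ B
  have hsum : convexHull ℝ A + convexHull ℝ B = shape R s V 0 (K + 1) := by
    rw [← convexHull_add]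
    apply Set.Subset.antisymm
    · apply convexHull_min _ (shape_convex _ _ _ _ _)
      rintro z hz
      rw [Set.mem_add] at hz
      obtain ⟨p, hp, q, hq, rfl⟩ := hz
      have hp' := hAsub hp
      have hq' := hBsub hq
      simp only [shape, Set.mem_setOf_eq] at hp' hq' ⊢
      obtain ⟨hp1, hp2, hp3, hp4, -⟩ := hp'
      obtain ⟨hq1, hq2, hq3, hq4, -⟩ := hq'
      have hsq : s * q.2 ≤ s * K := mul_le_mul_of_nonneg_left hq2 hs
      have hsp : 0 ≤ s * p.2 := mul_nonneg hs hp1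
      simp only [Prod.fst_add, Prod.snd_add]
      refine ⟨by linarith, by linarith, by linarith, by nlinarith, by nlinarith⟩
    · rw [hSsh]
      apply convexHull_mono
      rw [hA, hB, hC]
      rintro z (rfl | rfl | rfl | rfl | rfl)
      · exact Set.mem_add.2 ⟨(0,0), by simp, (0,0), by simp, by simp⟩
      · exact Set.mem_add.2 ⟨(0,0), by simp, (R,0), by simp, by simp⟩
      · exact Set.mem_add.2 ⟨(0,0), by simp, (V,K), by simp, by simp⟩
      · exact Set.mem_add.2 ⟨(0,1), by simp, (V,K), by simp,
          by simp [Prod.ext_iff]; ring⟩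
      · exact Set.mem_add.2 ⟨(0,1), by simp, (0,K), by simp,
          by simp [Prod.ext_iff]; ring⟩
  -- volumes
  have vP : (volume (convexHull ℝ A)).toReal = 0 := by
    rw [← hPsh, shape_volume (y₀ := 0) (le_refl 0) zero_le_one (by norm_num) (le_refl 0)
      (le_refl 0) (by norm_num)]
    norm_num
  have hQvol0 : (0:ℝ) ≤ R * 0 + s * 0 ^ 2 / 2 + (R * K + s * K ^ 2 / 2)
      - (R * 0 + s * 0 ^ 2 / 2) := by
    nlinarith [mul_nonneg hR0 hK0.le, mul_nonneg hs (sq_nonneg K)]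
  have vQ : (volume (convexHull ℝ B)).toReal = R * K + s * K ^ 2 / 2 := by
    rw [← hQsh, shape_volume (y₀ := 0) (le_refl 0) hK0.le rfl (le_refl s) hR0 (by linarith),
      ENNReal.toReal_ofReal hQvol0]
    ring
  have hSvol0 : (0:ℝ) ≤ R * K + s * K ^ 2 / 2 + (V * (K+1) + 0 * (K+1) ^ 2 / 2)
      - (V * K + 0 * K ^ 2 / 2) := by
    nlinarith [mul_nonneg hR0 hK0.le, mul_nonneg hs (sq_nonneg K)]
  have vS : (volume (convexHull ℝ A + convexHull ℝ B)).toReal = R * K + s * K ^ 2 / 2 + V := by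
    rw [hsum, shape_volume (y₀ := K) hK0.le (by linarith) (by linarith [hsK]) hs hR0
      (by linarith), ENNReal.toReal_ofReal hSvol0]
    ring
  refine ⟨{((0:ℤ),(0:ℤ)), (0,1)},
    {((0:ℤ),(0:ℤ)), ((r:ℤ),0), (0,(k:ℤ)), ((v:ℤ),(k:ℤ))}, by simp, by simp, ?_, ?_, ?_⟩
  · -- width of P
    rw [ePemb, hA, latticeWidth_hull _ _ ((0:ℝ),(0:ℝ)) ((0:ℝ),(1:ℝ)) (by simp) (by simp)
      ?_ ?_]
    · push_cast
      ring
    · rintro z hz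
      simp only [Set.mem_insert_iff, Set.mem_singleton_iff] at hz
      rcases hz with rfl | rfl <;> push_cast <;> simp <;> linarith
    · rintro z hz
      simp only [Set.mem_insert_iff, Set.mem_singleton_iff] at hz
      rcases hz with rfl | rfl <;> push_cast <;> simp <;> linarith
  · -- width of Q
    rw [eQemb, hB, latticeWidth_hull _ _ (R, (0:ℝ)) ((0:ℝ), K) (by simp) (by simp) ?_ ?_]
    · push_cast
      linarith [hW2eq]
    · rintro z hz
      simp only [Set.mem_insert_iff, Set.mem_singleton_iff] at hz
      have hKW : 0 ≤ K * W1 := mul_nonneg hK0.le hW1pos.le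
      rcases hz with rfl | rfl | rfl | rfl <;> push_cast <;> simp <;> nlinarith
    · rintro z hz
      simp only [Set.mem_insert_iff, Set.mem_singleton_iff] at hz
      have hKW : 0 ≤ K * W1 := mul_nonneg hK0.le hW1pos.le
      rcases hz with rfl | rfl | rfl | rfl <;> push_cast <;> simp <;> nlinarith
  · -- mixed area
    rw [mixedArea, ePemb, eQemb, vS, vP, vQ]
    ring


set_option maxHeartbeats 1000000 in
lemma case2 (w₁ w₂ v : ℕ) (hw₁ : 0 < w₁) (hle : w₁ ≤ w₂) (hvw : w₂ ≤ v) :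
    ∃ SP SQ : Finset (ℤ × ℤ), SP.Nonempty ∧ SQ.Nonempty ∧
      latticeWidth (1, (0:ℤ)) (convexHull ℝ (latticeEmbed '' SP)) = (w₁ : ℝ) ∧
      latticeWidth (1, (0:ℤ)) (convexHull ℝ (latticeEmbed '' SQ)) = (w₂ : ℝ) ∧
      mixedArea (convexHull ℝ (latticeEmbed '' SP)) (convexHull ℝ (latticeEmbed '' SQ))
        = (v : ℝ) := by
  set k : ℕ := (v - w₂) / w₁ + 1 with hkdef
  set q : ℕ := v - k * w₁ with hqdef
  have hdm := Nat.div_add_mod (v - w₂) w₁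
  have hmod : (v - w₂) % w₁ < w₁ := Nat.mod_lt _ hw₁
  have hkmul : k * w₁ = w₁ * ((v - w₂) / w₁) + w₁ := by rw [hkdef]; ring
  have hkv : k * w₁ ≤ v := by omega
  have hvk : v ≤ w₂ + k * w₁ := by omega
  have hqv : q + k * w₁ = v := by omega
  have hqw2 : q ≤ w₂ := by omega
  -- real versions
  set K : ℝ := (k : ℝ) with hK
  set W1 : ℝ := (w₁ : ℝ) with hW1
  set W2 : ℝ := (w₂ : ℝ) with hW2
  set V : ℝ := (v : ℝ) with hV
  set Qq : ℝ := (q : ℝ) with hQq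
  have hQ0 : 0 ≤ Qq := Nat.cast_nonneg q
  have hV0 : 0 ≤ V := Nat.cast_nonneg v
  have hK1 : 1 ≤ K := by rw [hK]; exact_mod_cast Nat.le_add_left 1 _
  have hK0 : 0 < K := lt_of_lt_of_le one_pos hK1
  have hW1pos : 0 < W1 := by rw [hW1]; exact_mod_cast hw₁
  have hQV : Qq + K * W1 = V := by rw [hQq, hK, hW1, hV]; exact_mod_cast hqv
  have hQW2 : Qq ≤ W2 := by rw [hQq, hW2]; exact_mod_cast hqw2
  have hW2V : W2 ≤ V := by rw [hW2, hV]; exact_mod_cast hvw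
  set s : ℝ := (W2 - Qq) / K with hs_def
  have hs : 0 ≤ s := div_nonneg (by linarith) hK0.le
  have hsK : s * K = W2 - Qq := div_mul_cancel₀ _ hK0.ne'
  have hsW1 : s ≤ W1 := by
    rw [hs_def, div_le_iff₀ hK0]
    nlinarith
  -- explicit vertex sets
  set A : Set (ℝ × ℝ) := {((0:ℝ),(0:ℝ)), (W1,1), (0,1)} with hA
  set B : Set (ℝ × ℝ) := {((0:ℝ),(0:ℝ)), (Qq,0), (W2,K), (0,K)} with hB
  set C : Set (ℝ × ℝ) := {((0:ℝ),(0:ℝ)), (Qq,0), (Qq+W1,1), (W1+W2,K+1), (0,K+1)} with hC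
  have ePemb : latticeEmbed '' (↑({((0:ℤ),(0:ℤ)), ((w₁:ℤ),1), (0,1)} : Finset (ℤ × ℤ))) = A := by
    rw [hA, hW1]; simp [latticeEmbed, Set.image_insert_eq, Prod.ext_iff]
  have eQemb : latticeEmbed ''
      (↑({((0:ℤ),(0:ℤ)), ((q:ℤ),0), ((w₂:ℤ),(k:ℤ)), (0,(k:ℤ))} : Finset (ℤ × ℤ))) = B := by
    rw [hB, hQq, hW2, hK]; simp [latticeEmbed, Set.image_insert_eq, Prod.ext_iff]
  have hPsh : shape 0 W1 0 W1 1 = convexHull ℝ A := by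
    rw [shape_eq_hull (y₀ := 0) (le_refl 0) zero_le_one rfl (le_refl W1) (le_refl 0)
      (by linarith), hA]
    norm_num
  have hQsK : Qq + s * K = W2 := by linarith [hsK]
  have hQsh : shape Qq s Qq s K = convexHull ℝ B := by
    rw [shape_eq_hull (y₀ := 0) (le_refl 0) hK0.le rfl (le_refl s) hQ0 (by linarith), hB]
    rw [show Qq + s * 0 = Qq by ring, hQsK]
    congr 1
    ext z
    simp only [Set.mem_insert_iff, Set.mem_singleton_iff]
    tauto
  have hSheq : Qq + W1 * 1 = (Qq + W1 - s) + s * 1 := by ring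
  have hStop : (Qq + W1 - s) + s * (K + 1) = W1 + W2 := by linarith [hsK]
  have hSsh : shape Qq W1 (Qq + W1 - s) s (K + 1) = convexHull ℝ C := by
    rw [shape_eq_hull (y₀ := 1) zero_le_one (by linarith) hSheq hsW1 hQ0
      (by linarith [hsK]), hC]
    rw [hStop, show Qq + W1 * 1 = Qq + W1 by ring]
  have hAsub : A ⊆ shape 0 W1 0 W1 1 := hPsh ▸ subset_convexHull ℝ A
  have hBsub : B ⊆ shape Qq s Qq s K := hQsh ▸ subset_convexHull ℝ B
  have hsum : convexHull ℝ A + convexHull ℝ B = shape Qq W1 (Qq + W1 - s) s (K + 1) := by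
    rw [← convexHull_add]
    apply Set.Subset.antisymm
    · apply convexHull_min _ (shape_convex _ _ _ _ _)
      rintro z hz
      rw [Set.mem_add] at hz
      obtain ⟨p, hp, q', hq', rfl⟩ := hz
      have hp' := hAsub hp
      have hq'' := hBsub hq'
      simp only [shape, Set.mem_setOf_eq] at hp' hq'' ⊢
      obtain ⟨hp1, hp2, hp3, hp4, -⟩ := hp'
      obtain ⟨hq1, hq2, hq3, hq4, -⟩ := hq''
      simp only [Prod.fst_add, Prod.snd_add]
      have h1 : s * q'.2 ≤ W1 * q'.2 := mul_le_mul_of_nonneg_right hsW1 hq1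
      have h2 : 0 ≤ (W1 - s) * (1 - p.2) := mul_nonneg (by linarith) (by linarith)
      refine ⟨by linarith, by linarith, by linarith, by nlinarith, by nlinarith⟩
    · rw [hSsh]
      apply convexHull_mono
      rw [hA, hB, hC]
      rintro z (rfl | rfl | rfl | rfl | rfl)
      · exact Set.mem_add.2 ⟨(0,0), by simp, (0,0), by simp, by simp⟩
      · exact Set.mem_add.2 ⟨(0,0), by simp, (Qq,0), by simp, by simp⟩
      · exact Set.mem_add.2 ⟨(W1,1), by simp, (Qq,0), by simp,
          by simp only [Prod.mk_add_mk, Prod.mk.injEq]; constructor <;> ring⟩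
      · exact Set.mem_add.2 ⟨(W1,1), by simp, (W2,K), by simp,
          by rw [Prod.mk_add_mk, add_comm (1:ℝ) K]⟩
      · exact Set.mem_add.2 ⟨(0,1), by simp, (0,K), by simp,
          by simp only [Prod.mk_add_mk, Prod.mk.injEq]; constructor <;> ring⟩
  -- volumes
  have vP : (volume (convexHull ℝ A)).toReal = W1 / 2 := by
    rw [← hPsh, shape_volume (y₀ := 0) (le_refl 0) zero_le_one rfl (le_refl W1) (le_refl 0)
      (by linarith), ENNReal.toReal_ofReal (by nlinarith)]
    ring
  have vQ : (volume (convexHull ℝ B)).toReal = Qq * K + s * K ^ 2 / 2 := by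
    rw [← hQsh, shape_volume (y₀ := 0) (le_refl 0) hK0.le rfl (le_refl s) hQ0 (by linarith),
      ENNReal.toReal_ofReal (by nlinarith [mul_nonneg hQ0 hK0.le, mul_nonneg hs (sq_nonneg K)])]
    ring
  have hSvol0 : (0:ℝ) ≤ Qq * 1 + W1 * 1 ^ 2 / 2 + ((Qq + W1 - s) * (K+1) + s * (K+1) ^ 2 / 2)
      - ((Qq + W1 - s) * 1 + s * 1 ^ 2 / 2) := by
    have e1 : 0 ≤ (Qq + W1 - s) * K := mul_nonneg (by linarith) hK0.le
    nlinarith [mul_nonneg hs (sq_nonneg (K+1)), mul_nonneg hs hK0.le, sq_nonneg K]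
  have vS : (volume (convexHull ℝ A + convexHull ℝ B)).toReal
      = Qq * 1 + W1 * 1 ^ 2 / 2 + ((Qq + W1 - s) * (K+1) + s * (K+1) ^ 2 / 2)
        - ((Qq + W1 - s) * 1 + s * 1 ^ 2 / 2) := by
    rw [hsum, shape_volume (y₀ := 1) zero_le_one (by linarith) hSheq hsW1 hQ0
      (by linarith [hsK]), ENNReal.toReal_ofReal hSvol0]
  refine ⟨{((0:ℤ),(0:ℤ)), ((w₁:ℤ),1), (0,1)},
    {((0:ℤ),(0:ℤ)), ((q:ℤ),0), ((w₂:ℤ),(k:ℤ)), (0,(k:ℤ))}, by simp, by simp, ?_, ?_, ?_⟩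
  · rw [ePemb, hA, latticeWidth_hull _ _ (W1, (1:ℝ)) ((0:ℝ),(0:ℝ)) (by simp) (by simp) ?_ ?_]
    · push_cast
      ring
    · rintro z hz
      simp only [Set.mem_insert_iff, Set.mem_singleton_iff] at hz
      rcases hz with rfl | rfl | rfl <;> push_cast <;> simp <;> linarith
    · rintro z hz
      simp only [Set.mem_insert_iff, Set.mem_singleton_iff] at hz
      rcases hz with rfl | rfl | rfl <;> push_cast <;> simp <;> linarith
  · rw [eQemb, hB, latticeWidth_hull _ _ (W2, K) ((0:ℝ),(0:ℝ)) (by simp) (by simp) ?_ ?_]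
    · push_cast
      ring
    · rintro z hz
      simp only [Set.mem_insert_iff, Set.mem_singleton_iff] at hz
      rcases hz with rfl | rfl | rfl | rfl <;> push_cast <;> simp <;> linarith
    · rintro z hz
      simp only [Set.mem_insert_iff, Set.mem_singleton_iff] at hz
      rcases hz with rfl | rfl | rfl | rfl <;> push_cast <;> simp <;> linarith
  · rw [mixedArea, ePemb, eQemb, vS, vP, vQ]
    linear_combination hQV


lemma main_le (w₁ w₂ v : ℕ) (hw₁ : 0 < w₁) (hle : w₁ ≤ w₂) (hv : w₂ % w₁ ≤ v)
    (u : ℤ × ℤ) (hu : Int.gcd u.1 u.2 = 1) :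
    ∃ P Q : Set (ℝ × ℝ), IsLatticePolytope P ∧ IsLatticePolytope Q ∧
      latticeWidth u P = (w₁ : ℝ) ∧ latticeWidth u Q = (w₂ : ℝ) ∧
      mixedArea P Q = (v : ℝ) := by
  by_cases hvw : v ≤ w₂
  · obtain ⟨SP, SQ, h1, h2, h3, h4, h5⟩ := case1 w₁ w₂ v hw₁ hle hv hvw
    exact transfer u hu _ SP SQ h1 h2 _ _ _ h3 h4 h5
  · obtain ⟨SP, SQ, h1, h2, h3, h4, h5⟩ := case2 w₁ w₂ v hw₁ hle (by omega)
    exact transfer u hu _ SP SQ h1 h2 _ _ _ h3 h4 h5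

lemma mixedArea_comm (P Q : Set (ℝ × ℝ)) : mixedArea P Q = mixedArea Q P := by
  unfold mixedArea
  rw [add_comm P Q]
  ring

end DiagSat

/-- Saturation part of the discrete diagram: for positive widths `w₁, w₂`, every
non-negative integer `v ≥ min{w₁ mod w₂, w₂ mod w₁}` is realized as a mixed area. -/
theorem diagram_saturation (w₁ w₂ : ℕ) (hw₁ : 0 < w₁) (hw₂ : 0 < w₂)
    (v : ℕ) (hv : min (w₁ % w₂) (w₂ % w₁) ≤ v)
    (u : ℤ × ℤ) (hu : Int.gcd u.1 u.2 = 1) :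
    ∃ P Q : Set (ℝ × ℝ), IsLatticePolytope P ∧ IsLatticePolytope Q ∧
      latticeWidth u P = (w₁ : ℝ) ∧ latticeWidth u Q = (w₂ : ℝ) ∧
      mixedArea P Q = (v : ℝ) := by
  rcases le_total w₁ w₂ with h | h
  · refine DiagSat.main_le w₁ w₂ v hw₁ h ?_ u hu
    rcases eq_or_lt_of_le h with rfl | hlt
    · simp [Nat.mod_self]
    · have h1 : w₁ % w₂ = w₁ := Nat.mod_eq_of_lt hlt
      have h2 : w₂ % w₁ < w₁ := Nat.mod_lt _ hw₁
      have h3 : min (w₁ % w₂) (w₂ % w₁) = w₂ % w₁ := by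
        rw [h1]; exact min_eq_right h2.le
      omega
  · have hv' : w₁ % w₂ ≤ v := by
      rcases eq_or_lt_of_le h with rfl | hlt
      · simp [Nat.mod_self]
      · have h1 : w₂ % w₁ = w₂ := Nat.mod_eq_of_lt hlt
        have h2 : w₁ % w₂ < w₂ := Nat.mod_lt _ hw₂
        have h3 : min (w₁ % w₂) (w₂ % w₁) = w₁ % w₂ := by
          rw [h1]; exact min_eq_left h2.le
        omega
    obtain ⟨P, Q, hP, hQ, h3, h4, h5⟩ := DiagSat.main_le w₂ w₁ v hw₂ h hv' u hu
    exact ⟨Q, P, hQ, hP, h4, h3, by rw [DiagSat.mixedArea_comm]; exact h5⟩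
end

section
/- Let v = (v₁₂, v₁₃, v₁₄, v₂₃, v₂₄, v₃₄) ∈ ℤ≥0⁶ satisfy the Plücker-type inequalities, and suppose that at least one of the three inequalities holds with equality (i.e., v is a boundary point of the discrete Plücker set). Then there exist four lattice segments P₁, P₂, P₃, P₄ in ℝ² (each the convex hull of at most two points of ℤ², possibly degenerate to a point) such that V(Pᵢ,Pⱼ) = v_{ij} for all 1 ≤ i < j ≤ 4. -/
open MeasureTheory Pointwise

/-- A lattice segment: the convex hull of (at most) two lattice points, possibly
degenerate to a point. -/
def IsLatticeSegment (P : Set (ℝ × ℝ)) : Prop :=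
  ∃ p q : ℤ × ℤ, P = convexHull ℝ {latticeEmbed p, latticeEmbed q}

/-! ### Auxiliary material: integer Plücker lifting -/

/-- signed 2x2 determinant of integer vectors -/
def Dz (a b : ℤ × ℤ) : ℤ := a.1 * b.2 - a.2 * b.1

/-- liftability of a sextuple as the pairwise determinants of four integer vectors -/
def Lft (p12 p13 p14 p23 p24 p34 : ℤ) : Prop :=
  ∃ u1 u2 u3 u4 : ℤ × ℤ, Dz u1 u2 = p12 ∧ Dz u1 u3 = p13 ∧ Dz u1 u4 = p14 ∧
    Dz u2 u3 = p23 ∧ Dz u2 u4 = p24 ∧ Dz u3 u4 = p34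

lemma natAbs_emod_lt' (a b : ℤ) (h : b ≠ 0) : (a % b).natAbs < b.natAbs := by
  have h1 : 0 ≤ a % b := Int.emod_nonneg a h
  have h2 : a % b < |b| := by rw [← Int.emod_abs]; exact Int.emod_lt_of_pos a (abs_pos.mpr h)
  rw [Int.abs_eq_natAbs] at h2
  omega

lemma lift_base (p12 p13 p14 p34 : ℤ) (h : p12 * p34 = 0) : Lft p12 p13 p14 0 0 p34 := by
  rcases mul_eq_zero.mp h with h | h
  · subst h
    by_cases h0 : p13 = 0 ∧ p14 = 0
    · exact ⟨0, 0, (1, 0), (0, p34), by simp [Dz, h0.1, h0.2]⟩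
    · set g : ℤ := (Int.gcd p13 p14 : ℤ) with hg
      have hgne : g ≠ 0 := by
        simp only [hg, ne_eq, Int.natCast_eq_zero, Int.gcd_eq_zero_iff]
        tauto
      obtain ⟨c, hc⟩ : g ∣ p13 := Int.gcd_dvd_left p13 p14
      obtain ⟨d, hd⟩ : g ∣ p14 := Int.gcd_dvd_right p13 p14
      have hbez : p13 * Int.gcdA p13 p14 + p14 * Int.gcdB p13 p14 = g :=
        (Int.gcd_eq_gcd_ab p13 p14).symm
      set x := Int.gcdA p13 p14
      set y := Int.gcdB p13 p14
      have key : c * x + d * y = 1 := by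
        have : g * (c * x + d * y) = g * 1 := by
          rw [hc, hd] at hbez; ring_nf; ring_nf at hbez; linarith
        exact mul_left_cancel₀ hgne this
      refine ⟨(g, 0), 0, (y * p34, c), (-(x * p34), d), ?_, ?_, ?_, ?_, ?_, ?_⟩ <;>
        simp only [Dz] <;> try linear_combination (p34 : ℤ) * key
      all_goals simp [hc, hd]
  · subst h
    exact ⟨(0, -1), (p12, 0), (p13, 0), (p14, 0), by norm_num [Dz]⟩

lemma lift_aux2 (n : ℕ) : ∀ p12 p13 p14 p23 p34 : ℤ, p23.natAbs < n →
    p12 * p34 + p14 * p23 = 0 → Lft p12 p13 p14 p23 0 p34 := by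
  induction n with
  | zero => intro _ _ _ _ _ h; omega
  | succ n ih =>
    intro p12 p13 p14 p23 p34 hlt hpl
    by_cases h0 : p23 = 0
    · subst h0
      exact lift_base p12 p13 p14 p34 (by linarith)
    · set k := p34 / p23 with hk
      set r := p34 % p23 with hr
      have hdiv : p23 * k + r = p34 := Int.mul_ediv_add_emod p34 p23
      have hrlt : r.natAbs < n := by
        have := natAbs_emod_lt' p34 p23 h0
        omega
      have h' : Lft (p14 + k * p12) p13 p12 (-r) 0 (-p23) :=
        ih (p14 + k * p12) p13 p12 (-r) (-p23) (by simpa using hrlt)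
          (by linear_combination -hpl - p12 * hdiv)
      obtain ⟨w1, w2, w3, w4, e12, e13, e14, e23, e24, e34⟩ := h'
      refine ⟨w1, w4, w3, (w2.1 - k * w4.1, w2.2 - k * w4.2), ?_, ?_, ?_, ?_, ?_, ?_⟩ <;>
        simp only [Dz] at *
      · linear_combination e14
      · linear_combination e13
      · linear_combination e12 - k * e14
      · linear_combination -e34
      · linear_combination -e24
      · linear_combination -e23 - k * e34 + hdiv

lemma lift_aux1 (n : ℕ) : ∀ p12 p13 p14 p23 p24 p34 : ℤ, p24.natAbs < n →
    p12 * p34 - p13 * p24 + p14 * p23 = 0 → Lft p12 p13 p14 p23 p24 p34 := by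
  induction n with
  | zero => intro _ _ _ _ _ _ h; omega
  | succ n ih =>
    intro p12 p13 p14 p23 p24 p34 hlt hpl
    by_cases h0 : p24 = 0
    · subst h0
      exact lift_aux2 (p23.natAbs + 1) p12 p13 p14 p23 p34 (by omega) (by linarith)
    · set k := p23 / p24 with hk
      set r := p23 % p24 with hr
      have hdiv : p24 * k + r = p23 := Int.mul_ediv_add_emod p23 p24
      have hrlt : r.natAbs < n := by
        have := natAbs_emod_lt' p23 p24 h0
        omega
      have h' : Lft p12 p14 (p13 - k * p14) p24 r (-p34) :=
        ih p12 p14 (p13 - k * p14) p24 r (-p34) hrlt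
          (by linear_combination -hpl - p14 * hdiv)
      obtain ⟨w1, w2, w3, w4, e12, e13, e14, e23, e24, e34⟩ := h'
      refine ⟨w1, w2, (w4.1 + k * w3.1, w4.2 + k * w3.2), w3, ?_, ?_, ?_, ?_, ?_, ?_⟩ <;>
        simp only [Dz] at *
      · linear_combination e12
      · linear_combination e14 + k * e13
      · linear_combination e13
      · linear_combination e24 + k * e23 + hdiv
      · linear_combination e23
      · linear_combination -e34

lemma lift_plucker (p12 p13 p14 p23 p24 p34 : ℤ)
    (h : p12 * p34 - p13 * p24 + p14 * p23 = 0) : Lft p12 p13 p14 p23 p24 p34 :=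
  lift_aux1 (p24.natAbs + 1) p12 p13 p14 p23 p24 p34 (by omega) h

/-! ### Auxiliary material: mixed area of two segments -/

lemma seg_eq_image_s14 (x : ℝ × ℝ) : segment ℝ 0 x = (fun t : ℝ => t • x) '' Set.Icc 0 1 := by
  rw [segment_eq_image]
  simp

lemma span_singleton_ne_top (x : ℝ × ℝ) : Submodule.span ℝ {x} ≠ ⊤ := by
  intro h
  have h1 : (1, 0) ∈ Submodule.span ℝ {x} := h ▸ Submodule.mem_top
  have h2 : ((0 : ℝ), (1 : ℝ)) ∈ Submodule.span ℝ {x} := h ▸ Submodule.mem_top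
  rw [Submodule.mem_span_singleton] at h1 h2
  obtain ⟨c, hc⟩ := h1
  obtain ⟨d, hd⟩ := h2
  have hc1 : c * x.1 = 1 := congrArg Prod.fst hc
  have hc2 : c * x.2 = 0 := congrArg Prod.snd hc
  have hd1 : d * x.1 = 0 := congrArg Prod.fst hd
  have hd2 : d * x.2 = 1 := congrArg Prod.snd hd
  nlinarith [hc1, hc2, hd1, hd2]

lemma vol_segment (x : ℝ × ℝ) : volume (segment ℝ 0 x) = 0 := by
  refine measure_mono_null ?_
    (Measure.addHaar_submodule volume (Submodule.span ℝ {x}) (span_singleton_ne_top x))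
  intro z hz
  rw [seg_eq_image_s14] at hz
  obtain ⟨t, _, rfl⟩ := hz
  exact Submodule.smul_mem _ t (Submodule.mem_span_singleton_self x)

/-- The linear map `(s, t) ↦ s • x + t • y`. -/
noncomputable def sumMap (x y : ℝ × ℝ) : (ℝ × ℝ) →ₗ[ℝ] (ℝ × ℝ) :=
  (LinearMap.fst ℝ ℝ ℝ).smulRight x + (LinearMap.snd ℝ ℝ ℝ).smulRight y

lemma sumMap_apply (x y : ℝ × ℝ) (p : ℝ × ℝ) : sumMap x y p = p.1 • x + p.2 • y := rfl

lemma det_sumMap (x y : ℝ × ℝ) : LinearMap.det (sumMap x y) = x.1 * y.2 - x.2 * y.1 := by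
  let b := Module.Basis.finTwoProd ℝ
  rw [← LinearMap.det_toMatrix b]
  rw [Matrix.det_fin_two]
  simp [LinearMap.toMatrix_apply, sumMap_apply, b, Module.Basis.finTwoProd_zero, Module.Basis.finTwoProd_one]
  ring

lemma seg_add_seg (x y : ℝ × ℝ) :
    segment ℝ 0 x + segment ℝ 0 y = (sumMap x y) '' (Set.Icc 0 1 ×ˢ Set.Icc 0 1) := by
  rw [seg_eq_image_s14, seg_eq_image_s14]
  ext z
  constructor
  · rintro ⟨a, ⟨s, hs, rfl⟩, b, ⟨t, ht, rfl⟩, rfl⟩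
    exact ⟨(s, t), ⟨hs, ht⟩, rfl⟩
  · rintro ⟨⟨s, t⟩, ⟨hs, ht⟩, rfl⟩
    exact ⟨s • x, ⟨s, hs, rfl⟩, t • y, ⟨t, ht, rfl⟩, rfl⟩

lemma vol_square : volume (Set.Icc (0:ℝ) 1 ×ˢ Set.Icc (0:ℝ) 1) = 1 := by
  rw [Measure.volume_eq_prod, Measure.prod_prod, Real.volume_Icc]
  norm_num

lemma mixedArea_seg_s14 (x y : ℝ × ℝ) :
    mixedArea (segment ℝ 0 x) (segment ℝ 0 y) = |x.1 * y.2 - x.2 * y.1| := by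
  unfold mixedArea
  rw [vol_segment, vol_segment, seg_add_seg,
    Measure.addHaar_image_linearMap volume (sumMap x y), det_sumMap, vol_square]
  simp [ENNReal.toReal_ofReal (abs_nonneg _)]

lemma latticeEmbed_zero : latticeEmbed (0, 0) = 0 := by
  simp [latticeEmbed]

/-- the canonical lattice segment from the origin to `a` -/
def segLat (a : ℤ × ℤ) : Set (ℝ × ℝ) := convexHull ℝ {latticeEmbed (0, 0), latticeEmbed a}

lemma isLatticeSegment_segLat (a : ℤ × ℤ) : IsLatticeSegment (segLat a) := ⟨(0, 0), a, rfl⟩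

lemma mixedArea_segLat (a b : ℤ × ℤ) :
    mixedArea (segLat a) (segLat b) = |((Dz a b : ℤ) : ℝ)| := by
  unfold segLat
  rw [latticeEmbed_zero, convexHull_pair, convexHull_pair, mixedArea_seg_s14]
  simp only [latticeEmbed, Dz]
  push_cast
  ring_nf

lemma mixedArea_segLat' (a b : ℤ × ℤ) (v : ℕ) (h : Dz a b = v ∨ Dz a b = -v) :
    mixedArea (segLat a) (segLat b) = (v : ℝ) := by
  rw [mixedArea_segLat]
  rcases h with h | h <;> rw [h] <;> push_cast <;> simp [abs_of_nonneg]

/-! ### The main theorem -/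

/-- Every boundary point of the discrete Plücker set (a tuple of non-negative integers
satisfying the Plücker-type inequalities, at least one with equality) is realized by
four lattice segments. -/
theorem boundary_realizable (v₁₂ v₁₃ v₁₄ v₂₃ v₂₄ v₃₄ : ℕ)
    (hpl₁ : v₁₄ * v₂₃ ≤ v₁₂ * v₃₄ + v₁₃ * v₂₄)
    (hpl₂ : v₁₂ * v₃₄ ≤ v₁₃ * v₂₄ + v₁₄ * v₂₃)
    (hpl₃ : v₁₃ * v₂₄ ≤ v₁₄ * v₂₃ + v₁₂ * v₃₄)
    (hbd : v₁₂ * v₃₄ + v₁₃ * v₂₄ = v₁₄ * v₂₃ ∨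
           v₁₃ * v₂₄ + v₁₄ * v₂₃ = v₁₂ * v₃₄ ∨
           v₁₄ * v₂₃ + v₁₂ * v₃₄ = v₁₃ * v₂₄) :
    ∃ P₁ P₂ P₃ P₄ : Set (ℝ × ℝ),
      IsLatticeSegment P₁ ∧ IsLatticeSegment P₂ ∧
      IsLatticeSegment P₃ ∧ IsLatticeSegment P₄ ∧
      mixedArea P₁ P₂ = (v₁₂ : ℝ) ∧ mixedArea P₁ P₃ = (v₁₃ : ℝ) ∧
      mixedArea P₁ P₄ = (v₁₄ : ℝ) ∧ mixedArea P₂ P₃ = (v₂₃ : ℝ) ∧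
      mixedArea P₂ P₄ = (v₂₄ : ℝ) ∧ mixedArea P₃ P₄ = (v₃₄ : ℝ) := by
  -- pick signs making the signed Plücker relation hold
  obtain ⟨p23, p24, hs23, hs24, hpl⟩ :
      ∃ p23 p24 : ℤ, (p23 = (v₂₃ : ℤ) ∨ p23 = -(v₂₃ : ℤ)) ∧
        (p24 = (v₂₄ : ℤ) ∨ p24 = -(v₂₄ : ℤ)) ∧
        (v₁₂ : ℤ) * v₃₄ - (v₁₃ : ℤ) * p24 + (v₁₄ : ℤ) * p23 = 0 := by
    rcases hbd with h | h | h
    · exact ⟨-(v₂₃ : ℤ), -(v₂₄ : ℤ), Or.inr rfl, Or.inr rfl, by push_cast; push_cast at h; linarith⟩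
    · exact ⟨-(v₂₃ : ℤ), (v₂₄ : ℤ), Or.inr rfl, Or.inl rfl, by push_cast; push_cast at h; linarith⟩
    · exact ⟨(v₂₃ : ℤ), (v₂₄ : ℤ), Or.inl rfl, Or.inl rfl, by push_cast; push_cast at h; linarith⟩
  obtain ⟨u1, u2, u3, u4, e12, e13, e14, e23, e24, e34⟩ :=
    lift_plucker (v₁₂ : ℤ) (v₁₃ : ℤ) (v₁₄ : ℤ) p23 p24 (v₃₄ : ℤ) hpl
  refine ⟨segLat u1, segLat u2, segLat u3, segLat u4,
    isLatticeSegment_segLat u1, isLatticeSegment_segLat u2,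
    isLatticeSegment_segLat u3, isLatticeSegment_segLat u4,
    mixedArea_segLat' u1 u2 v₁₂ (Or.inl e12),
    mixedArea_segLat' u1 u3 v₁₃ (Or.inl e13),
    mixedArea_segLat' u1 u4 v₁₄ (Or.inl e14),
    mixedArea_segLat' u2 u3 v₂₃ ?_,
    mixedArea_segLat' u2 u4 v₂₄ ?_,
    mixedArea_segLat' u3 u4 v₃₄ (Or.inl e34)⟩
  · rcases hs23 with h | h
    · exact Or.inl (e23.trans h)
    · exact Or.inr (e23.trans h)
  · rcases hs24 with h | h
    · exact Or.inl (e24.trans h)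
    · exact Or.inr (e24.trans h)
end
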